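/- arXiv:0710.3250 — 6 statements merged into one kernel-verified Lean document; each statement's English description precedes it below -/
import Mathlib

section
/- Let K be a field and let q ∈ K be of free type, i.e., q ≠ 0 and {n}_q ≠ 0 for every nonzero integer n (equivalently: q^n ≠ 1 for every nonzero integer n when q ≠ 1, and char K = 0 when q = 1). If P and Q are two commuting elements of the q-deformed Heisenberg algebra H_q over K, then there exists a nonzero bivariate polynomial F(x,y) with coefficients in K such that F(P,Q) = 0 in H_q. -/
set_option maxHeartbeats 1000000
set_option synthInstance.maxHeartbeats 400000

noncomputable section

open Classical in
/-- The `q`-integer `{n}_q = (qⁿ − 1)/(q − 1)` for `q ≠ 1`, and `{n}_q = n·1_K` for `q = 1`. -/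
def qInt (K : Type*) [Field K] (q : K) (n : ℤ) : K :=
  if q = 1 then (n : K) else (q ^ n - 1) / (q - 1)

/-- The defining relation `AB = q·BA + 1` of the `q`-deformed Heisenberg algebra,
imposed on the free algebra on two generators. -/
inductive qHeisRel (K : Type*) [Field K] (q : K) :
    FreeAlgebra K (Fin 2) → FreeAlgebra K (Fin 2) → Prop
  | rel : qHeisRel K q (FreeAlgebra.ι K 0 * FreeAlgebra.ι K 1)
      (q • (FreeAlgebra.ι K 1 * FreeAlgebra.ι K 0) + 1)

/-- The `q`-deformed Heisenberg algebra `H_q = K⟨A,B⟩/⟨AB − qBA − 1⟩`. -/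
abbrev qHeis (K : Type*) [Field K] (q : K) : Type _ := RingQuot (qHeisRel K q)

/-- The generator `A` of `H_q`. -/
def qA (K : Type*) [Field K] (q : K) : qHeis K q :=
  RingQuot.mkAlgHom K (qHeisRel K q) (FreeAlgebra.ι K 0)

/-- The generator `B` of `H_q`. -/
def qB (K : Type*) [Field K] (q : K) : qHeis K q :=
  RingQuot.mkAlgHom K (qHeisRel K q) (FreeAlgebra.ι K 1)


namespace HSproof

variable {K : Type*} [Field K] (q : K)

lemma qInt_zero : qInt K q 0 = 0 := by
  unfold qInt; split <;> simp

lemma qInt_one : qInt K q 1 = 1 := by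
  unfold qInt; split
  · simp
  · rename_i h
    rw [zpow_one]
    exact div_self (sub_ne_zero.mpr h)

lemma qInt_add (hq : q ≠ 0) (n m : ℤ) :
    qInt K q (n + m) = q ^ m * qInt K q n + qInt K q m := by
  unfold qInt; split
  · rename_i h; subst h; push_cast; simp [one_zpow]
  · rename_i h
    have h1 : q - 1 ≠ 0 := sub_ne_zero.mpr h
    field_simp
    rw [zpow_add₀ hq]
    ring

lemma qInt_injective (hq : q ≠ 0) (hfree : ∀ n : ℤ, n ≠ 0 → qInt K q n ≠ 0) :
    Function.Injective (qInt K q) := by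
  intro n m h
  by_contra hnm
  have h2 : qInt K q ((n - m) + m) = q ^ m * qInt K q (n - m) + qInt K q m :=
    qInt_add q hq _ _
  rw [sub_add_cancel, h, right_eq_add] at h2
  have : qInt K q (n - m) ≠ 0 := hfree _ (sub_ne_zero.mpr hnm)
  exact this (by
    rcases mul_eq_zero.mp h2 with h3 | h3
    · exact absurd h3 (zpow_ne_zero m hq)
    · exact h3)

/-- The module `⊕_{n ∈ ℤ} K` on which `H_q` acts. -/
abbrev qV (K : Type*) [Field K] : Type _ := ℤ →₀ K

/-- `A` acts as the `q`-derivative: `e_n ↦ {n}_q e_{n-1}`. -/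
def opA : Module.End K (qV K) := Finsupp.lsum K fun n => qInt K q n • Finsupp.lsingle (n - 1)

/-- `B` acts as the shift `e_n ↦ e_{n+1}`. -/
def opB : Module.End K (qV K) := Finsupp.lsum K fun n => Finsupp.lsingle (n + 1)

lemma opA_single (n : ℤ) (c : K) :
    opA q (Finsupp.single n c) = qInt K q n • Finsupp.single (n - 1) c := by
  rw [opA, Finsupp.lsum_single, LinearMap.smul_apply, Finsupp.lsingle_apply]

lemma opB_single (n : ℤ) (c : K) :
    (opB : Module.End K (qV K)) (Finsupp.single n c) = Finsupp.single (n + 1) c := by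
  rw [opB, Finsupp.lsum_single, Finsupp.lsingle_apply]

lemma op_rel (hq : q ≠ 0) :
    opA q * opB = q • ((opB : Module.End K (qV K)) * opA q) + 1 := by
  apply Finsupp.lhom_ext
  intro n b
  rw [Module.End.mul_apply, opB_single, opA_single]
  rw [LinearMap.add_apply, LinearMap.smul_apply, Module.End.mul_apply, opA_single]
  rw [map_smul, opB_single]
  rw [Module.End.one_apply]
  have hn : n - 1 + 1 = n := by ring
  have hn2 : n + 1 - 1 = n := by ring
  rw [hn, hn2]
  have : qInt K q (n + 1) = q * qInt K q n + 1 := by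
    rw [qInt_add q hq n 1, zpow_one, qInt_one]
  rw [this, smul_smul, add_smul, one_smul]


section Rho

/-- The representation of `H_q` on `qV K`. -/
def rho (hq : q ≠ 0) : qHeis K q →ₐ[K] Module.End K (qV K) :=
  RingQuot.liftAlgHom K ⟨FreeAlgebra.lift K ![opA q, opB], by
    rintro x y ⟨⟩
    simp only [map_mul, map_add, map_smul, map_one, FreeAlgebra.lift_ι_apply,
      Matrix.cons_val_zero, Matrix.cons_val_one, Matrix.head_cons]
    exact op_rel q hq⟩

lemma rho_A (hq : q ≠ 0) : rho q hq (qA K q) = opA q := by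
  rw [qA, rho, RingQuot.liftAlgHom_mkAlgHom_apply]
  simp [FreeAlgebra.lift_ι_apply]

lemma rho_B (hq : q ≠ 0) : rho q hq (qB K q) = opB := by
  rw [qB, rho, RingQuot.liftAlgHom_mkAlgHom_apply]
  simp [FreeAlgebra.lift_ι_apply]

end Rho

section InHq

lemma heis_rel : qA K q * qB K q = q • (qB K q * qA K q) + 1 := by
  have h := RingQuot.mkAlgHom_rel K (qHeisRel.rel (K := K) (q := q))
  simpa only [map_mul, map_smul, map_add, map_one, qA, qB] using h

lemma A_mul_pow_B (hq : q ≠ 0) (k : ℕ) :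
    qA K q * qB K q ^ k =
      (q ^ k) • (qB K q ^ k * qA K q) + qInt K q k • qB K q ^ (k - 1) := by
  induction k with
  | zero => simp [qInt_zero]
  | succ k ih =>
    have step1 : qA K q * qB K q ^ (k + 1) =
        q • (qB K q * (qA K q * qB K q ^ k)) + qB K q ^ k := by
      rw [pow_succ', ← mul_assoc, heis_rel q, add_mul, one_mul, smul_mul_assoc, mul_assoc]
    rw [step1, ih, mul_add, mul_smul_comm, mul_smul_comm, smul_add, smul_smul, smul_smul]
    have h1 : qB K q * (qB K q ^ k * qA K q) = qB K q ^ (k + 1) * qA K q := by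
      rw [← mul_assoc, ← pow_succ']
    have h2 : q * q ^ k = q ^ (k + 1) := (pow_succ' q k).symm
    have h3 : qInt K q ((k : ℕ) + 1 : ℕ) = q * qInt K q k + 1 := by
      push_cast
      rw [qInt_add q hq _ 1, zpow_one, qInt_one]
    rw [h1, h2, h3, Nat.add_sub_cancel]
    have h4 : (q * qInt K q k) • (qB K q * qB K q ^ (k - 1)) =
        (q * qInt K q k) • (qB K q ^ k) := by
      cases k with
      | zero => simp [qInt_zero]
      | succ j => rw [Nat.add_sub_cancel, ← pow_succ']
    rw [h4, add_smul, one_smul, add_assoc]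

/-- The span of the normal-ordered monomials `B^i A^j`. -/
def monSpan : Submodule K (qHeis K q) :=
  Submodule.span K (Set.range (fun p : ℕ × ℕ => qB K q ^ p.1 * qA K q ^ p.2))

lemma mon_mem (i j : ℕ) : qB K q ^ i * qA K q ^ j ∈ monSpan q :=
  Submodule.subset_span ⟨(i, j), rfl⟩

lemma monSpan_mul_A {x : qHeis K q} (hx : x ∈ monSpan q) : x * qA K q ∈ monSpan q := by
  induction hx using Submodule.span_induction with
  | mem x hx =>
      obtain ⟨⟨i, j⟩, rfl⟩ := hx
      rw [mul_assoc, ← pow_succ]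
      exact mon_mem q i (j + 1)
  | zero => simpa using (monSpan q).zero_mem
  | add x y hx hy ihx ihy => rw [add_mul]; exact (monSpan q).add_mem ihx ihy
  | smul c x hx ihx => rw [smul_mul_assoc]; exact (monSpan q).smul_mem c ihx

lemma monSpan_B_mul {x : qHeis K q} (hx : x ∈ monSpan q) : qB K q * x ∈ monSpan q := by
  induction hx using Submodule.span_induction with
  | mem x hx =>
      obtain ⟨⟨i, j⟩, rfl⟩ := hx
      rw [← mul_assoc, ← pow_succ']
      exact mon_mem q (i + 1) j
  | zero => simpa using (monSpan q).zero_mem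
  | add x y hx hy ihx ihy => rw [mul_add]; exact (monSpan q).add_mem ihx ihy
  | smul c x hx ihx => rw [mul_smul_comm]; exact (monSpan q).smul_mem c ihx

lemma monSpan_pow_A_mul_pow_B (hq : q ≠ 0) (j k : ℕ) : qA K q ^ j * qB K q ^ k ∈ monSpan q := by
  induction j generalizing k with
  | zero => simpa using mon_mem q k 0
  | succ j ih =>
      have hsplit : qA K q ^ (j + 1) * qB K q ^ k =
          (q ^ k) • ((qA K q ^ j * qB K q ^ k) * qA K q)
            + qInt K q k • (qA K q ^ j * qB K q ^ (k - 1)) := by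
        rw [pow_succ, mul_assoc, A_mul_pow_B q hq k, mul_add, mul_smul_comm, mul_smul_comm,
          ← mul_assoc]
      rw [hsplit]
      exact (monSpan q).add_mem
        ((monSpan q).smul_mem _ (monSpan_mul_A q (ih k)))
        ((monSpan q).smul_mem _ (ih (k - 1)))

lemma monSpan_mul (hq : q ≠ 0) {x y : qHeis K q} (hx : x ∈ monSpan q) (hy : y ∈ monSpan q) :
    x * y ∈ monSpan q := by
  induction hy using Submodule.span_induction with
  | mem y hy =>
      obtain ⟨⟨k, l⟩, rfl⟩ := hy
      induction hx using Submodule.span_induction with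
      | mem x hx =>
          obtain ⟨⟨i, j⟩, rfl⟩ := hx
          have : qB K q ^ i * qA K q ^ j * (qB K q ^ k * qA K q ^ l) =
              qB K q ^ i * ((qA K q ^ j * qB K q ^ k) * qA K q ^ l) := by
            rw [mul_assoc, mul_assoc]
          rw [this]
          have h1 : (qA K q ^ j * qB K q ^ k) * qA K q ^ l ∈ monSpan q := by
            clear this
            induction l with
            | zero => simpa using monSpan_pow_A_mul_pow_B q hq j k
            | succ l ihl => rw [pow_succ, ← mul_assoc]; exact monSpan_mul_A q ihl
          clear this
          induction i with
          | zero => simpa using h1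
          | succ i ihi =>
              rw [pow_succ', mul_assoc]
              exact monSpan_B_mul q ihi
      | zero => simpa using (monSpan q).zero_mem
      | add a b ha hb iha ihb => rw [add_mul]; exact (monSpan q).add_mem iha ihb
      | smul c a ha iha => rw [smul_mul_assoc]; exact (monSpan q).smul_mem c iha
  | zero => simpa using (monSpan q).zero_mem
  | add a b ha hb iha ihb => rw [mul_add]; exact (monSpan q).add_mem iha ihb
  | smul c a ha iha => rw [mul_smul_comm]; exact (monSpan q).smul_mem c iha

lemma monSpan_eq_top (hq : q ≠ 0) : ∀ x : qHeis K q, x ∈ monSpan q := by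
  intro x
  obtain ⟨y, rfl⟩ := RingQuot.mkAlgHom_surjective K (qHeisRel K q) x
  induction y using FreeAlgebra.induction with
  | grade0 r =>
      rw [AlgHom.commutes, Algebra.algebraMap_eq_smul_one]
      exact (monSpan q).smul_mem r (by simpa using mon_mem q 0 0)
  | grade1 x =>
      fin_cases x
      · exact (by simpa using mon_mem q 0 1 : qA K q ∈ monSpan q)
      · exact (by simpa using mon_mem q 1 0 : qB K q ∈ monSpan q)
  | mul a b ha hb => rw [map_mul]; exact monSpan_mul q hq ha hb
  | add a b ha hb => rw [map_add]; exact (monSpan q).add_mem ha hb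

end InHq

section BandData

open Polynomial

/-- The affine shift polynomial: evaluating at `{n}_q` gives `{n+s}_q`. -/
def σp (s : ℤ) : Polynomial K := C (q ^ s) * X + C (qInt K q s)

lemma σp_eval (hq : q ≠ 0) (s n : ℤ) :
    (σp q s).eval (qInt K q n) = qInt K q (n + s) := by
  rw [σp, qInt_add q hq n s]
  simp

lemma σp_natDegree (hq : q ≠ 0) (s : ℤ) : (σp q s).natDegree = 1 :=
  natDegree_linear (zpow_ne_zero s hq)

lemma σp_ne_zero (hq : q ≠ 0) (s : ℤ) : σp q s ≠ 0 := by
  intro h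
  have := σp_natDegree q hq s
  rw [h] at this
  simp at this

/-- The evaluation-and-place map: `D ↦ Σ_s (D s)({n}_q) e_{n+s}`. -/
def repSumL (n : ℤ) : (ℤ →₀ Polynomial K) →ₗ[K] qV K :=
  Finsupp.lsum K fun s => (Polynomial.leval (qInt K q n)).smulRight (Finsupp.single (n + s) 1)

lemma repSumL_single (n s : ℤ) (P : Polynomial K) :
    repSumL q n (Finsupp.single s P) = P.eval (qInt K q n) • Finsupp.single (n + s) 1 := by
  rw [repSumL, Finsupp.lsum_single]
  rfl

/-- `x` is a banded operator with band data `D`. -/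
def Rep (x : Module.End K (qV K)) (D : ℤ →₀ Polynomial K) : Prop :=
  ∀ n : ℤ, x (Finsupp.single n 1) = repSumL q n D

lemma rep_coeff {x : Module.End K (qV K)} {D : ℤ →₀ Polynomial K} (h : Rep q x D)
    (n t : ℤ) : (x (Finsupp.single n 1)) (n + t) = (D t).eval (qInt K q n) := by
  rw [h n, repSumL, Finsupp.lsum_apply, Finsupp.sum, Finset.sum_apply']
  rw [Finset.sum_eq_single t]
  · simp [LinearMap.smulRight_apply, Finsupp.single_apply]
  · intro s hs hst
    have : n + s ≠ n + t := by omega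
    simp [LinearMap.smulRight_apply, Finsupp.single_apply, this]
  · intro ht
    rw [Finsupp.notMem_support_iff.mp ht]
    simp

lemma qInt_image_infinite (hq : q ≠ 0) (hfree : ∀ n : ℤ, n ≠ 0 → qInt K q n ≠ 0) :
    {x : K | ∃ n : ℤ, qInt K q n = x}.Infinite :=
  Set.infinite_of_injective_forall_mem (qInt_injective q hq hfree) (fun n => ⟨n, rfl⟩)

lemma poly_eq_zero_of_qInt_roots (hq : q ≠ 0) (hfree : ∀ n : ℤ, n ≠ 0 → qInt K q n ≠ 0)
    {p : Polynomial K} (h : ∀ n : ℤ, p.eval (qInt K q n) = 0) : p = 0 := by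
  apply Polynomial.eq_zero_of_infinite_isRoot
  apply Set.Infinite.mono _ (qInt_image_infinite q hq hfree)
  rintro x ⟨n, rfl⟩
  exact h n

lemma rep_unique (hq : q ≠ 0) (hfree : ∀ n : ℤ, n ≠ 0 → qInt K q n ≠ 0)
    {x : Module.End K (qV K)} {D E : ℤ →₀ Polynomial K}
    (hD : Rep q x D) (hE : Rep q x E) : D = E := by
  ext t k
  have h1 : D t - E t = 0 := by
    apply poly_eq_zero_of_qInt_roots q hq hfree
    intro n
    rw [Polynomial.eval_sub, sub_eq_zero, ← rep_coeff q hD n t, ← rep_coeff q hE n t]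
  have := sub_eq_zero.mp h1
  rw [this]

lemma rep_zero : Rep q (0 : Module.End K (qV K)) 0 := by
  intro n
  simp

lemma eq_zero_of_rep_zero {x : Module.End K (qV K)} (h : Rep q x 0) : x = 0 := by
  apply Finsupp.lhom_ext
  intro n b
  have h1 : (Finsupp.single n b : qV K) = b • Finsupp.single n 1 := by
    rw [Finsupp.smul_single_one]
  rw [h1, map_smul, h n, map_zero]
  simp

/-- Convolution of band data, matching composition of banded operators. -/
def conv (D E : ℤ →₀ Polynomial K) : ℤ →₀ Polynomial K :=
  E.sum fun s P => D.sum fun m Q => Finsupp.single (s + m) (P * Q.comp (σp q s))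

lemma rep_mul (hq : q ≠ 0) {x y : Module.End K (qV K)} {D E : ℤ →₀ Polynomial K}
    (hx : Rep q x D) (hy : Rep q y E) : Rep q (x * y) (conv q D E) := by
  intro n
  rw [Module.End.mul_apply, hy n, repSumL, Finsupp.lsum_apply, map_finsuppSum]
  rw [conv, map_finsuppSum]
  apply Finsupp.sum_congr
  intro s hs
  rw [LinearMap.smulRight_apply, map_smul, hx (n + s), map_finsuppSum, repSumL,
    Finsupp.lsum_apply, Finsupp.smul_sum]
  apply Finsupp.sum_congr
  intro m hm
  simp only [Finsupp.lsum_single, LinearMap.smulRight_apply, Polynomial.leval_apply,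
    Polynomial.eval_mul, Polynomial.eval_comp, σp_eval q hq, smul_smul, ← add_assoc]

/-- The polynomial whose value at `{n}_q` is `{n}{n-1}⋯{n-j+1}`. -/
def pP (j : ℕ) : Polynomial K :=
  ∏ r ∈ Finset.range j, (C (q ^ (-(r : ℤ))) * (X - C (qInt K q r)))

lemma pP_eval (hq : q ≠ 0) (j : ℕ) (n : ℤ) :
    (pP q j).eval (qInt K q n) = ∏ r ∈ Finset.range j, qInt K q (n - r) := by
  rw [pP, Polynomial.eval_prod]
  apply Finset.prod_congr rfl
  intro r _
  have h1 := qInt_add q hq (n - r) r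
  rw [sub_add_cancel] at h1
  rw [Polynomial.eval_mul, Polynomial.eval_C, Polynomial.eval_sub, Polynomial.eval_X,
    Polynomial.eval_C, h1]
  rw [add_sub_cancel_right, ← mul_assoc, ← zpow_add₀ hq]
  simp

lemma pP_factor_ne_zero (hq : q ≠ 0) (r : ℕ) :
    (C (q ^ (-(r : ℤ))) * (X - C (qInt K q r)) : Polynomial K) ≠ 0 :=
  mul_ne_zero (by simpa using zpow_ne_zero (-(r:ℤ)) hq) (Polynomial.X_sub_C_ne_zero _)

lemma pP_ne_zero (hq : q ≠ 0) (j : ℕ) : pP q j ≠ 0 := by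
  rw [pP, Finset.prod_ne_zero_iff]
  intro r _
  exact pP_factor_ne_zero q hq r

lemma pP_natDegree (hq : q ≠ 0) (j : ℕ) : (pP q j).natDegree = j := by
  rw [pP, Polynomial.natDegree_prod _ _ (fun r _ => pP_factor_ne_zero q hq r)]
  have : ∀ r ∈ Finset.range j,
      ((C (q ^ (-(r : ℤ))) * (X - C (qInt K q r))) : Polynomial K).natDegree = 1 := by
    intro r _
    have h2 : (C (q ^ (-(r : ℤ))) * (X - C (qInt K q r)) : Polynomial K)
        = C (q ^ (-(r : ℤ))) * X + C (-(q ^ (-(r : ℤ)) * qInt K q r)) := by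
      rw [mul_sub, ← Polynomial.C_mul, sub_eq_add_neg, ← Polynomial.C_neg]
    rw [h2]
    exact natDegree_linear (zpow_ne_zero _ hq)
  rw [Finset.sum_congr rfl this]
  simp

lemma opA_pow_single (j : ℕ) (n : ℤ) :
    ((opA q) ^ j) (Finsupp.single n 1) =
      (∏ r ∈ Finset.range j, qInt K q (n - r)) • Finsupp.single (n - j) 1 := by
  induction j generalizing n with
  | zero => simp
  | succ j ih =>
    rw [pow_succ, Module.End.mul_apply, opA_single, map_smul, ih (n - 1), smul_smul]
    have hidx : n - 1 - (j : ℤ) = n - ((j : ℕ) + 1 : ℕ) := by push_cast; ring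
    have hco : qInt K q n * ∏ r ∈ Finset.range j, qInt K q ((n - 1) - r)
        = ∏ r ∈ Finset.range (j + 1), qInt K q (n - r) := by
      rw [Finset.prod_range_succ', Nat.cast_zero, sub_zero, mul_comm]
      congr 1
      apply Finset.prod_congr rfl
      intro r _
      congr 1
      push_cast
      ring
    rw [hidx, hco]

lemma opB_pow_single (i : ℕ) (n : ℤ) :
    ((opB : Module.End K (qV K)) ^ i) (Finsupp.single n 1) = Finsupp.single (n + i) 1 := by
  induction i generalizing n with
  | zero => simp
  | succ i ih =>
    rw [pow_succ', Module.End.mul_apply, ih n, opB_single]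
    congr 1
    push_cast
    ring

lemma rep_mon (hq : q ≠ 0) (i j : ℕ) :
    Rep q (rho q hq (qB K q ^ i * qA K q ^ j)) (Finsupp.single ((i : ℤ) - j) (pP q j)) := by
  intro n
  rw [map_mul, map_pow, map_pow, rho_A, rho_B, Module.End.mul_apply, opA_pow_single,
    map_smul, opB_pow_single, repSumL_single, pP_eval q hq]
  congr 2
  ring

end BandData

section Injectivity

open Polynomial

lemma rep_sum_smul {ι : Type*} (c : ι →₀ K) (x : ι → Module.End K (qV K))
    (D : ι → ℤ →₀ Polynomial K) (h : ∀ i ∈ c.support, Rep q (x i) (D i)) :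
    Rep q (c.sum fun i k => k • x i) (c.sum fun i k => k • D i) := by
  intro n
  rw [Finsupp.sum, Finsupp.sum, LinearMap.sum_apply, map_sum]
  apply Finset.sum_congr rfl
  intro i hi
  rw [LinearMap.smul_apply, map_smul, h i hi n]

/-- Band data of a normal-ordered expansion. -/
def Dof (c : (ℕ × ℕ) →₀ K) : ℤ →₀ Polynomial K :=
  c.sum fun p k => k • Finsupp.single ((p.1 : ℤ) - p.2) (pP q p.2)

lemma exists_expansion (hq : q ≠ 0) (x : qHeis K q) :
    ∃ c : (ℕ × ℕ) →₀ K, (c.sum fun p k => k • (qB K q ^ p.1 * qA K q ^ p.2)) = x :=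
  Finsupp.mem_span_range_iff_exists_finsupp.mp (monSpan_eq_top q hq x)

lemma rep_expansion (hq : q ≠ 0) (c : (ℕ × ℕ) →₀ K) :
    Rep q (rho q hq (c.sum fun p k => k • (qB K q ^ p.1 * qA K q ^ p.2))) (Dof q c) := by
  have h2 := rep_sum_smul q c (fun p => rho q hq (qB K q ^ p.1 * qA K q ^ p.2))
    (fun p => Finsupp.single ((p.1 : ℤ) - p.2) (pP q p.2)) (fun p _ => rep_mon q hq p.1 p.2)
  have h3 : rho q hq (c.sum fun p k => k • (qB K q ^ p.1 * qA K q ^ p.2)) =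
      c.sum fun p k => k • rho q hq (qB K q ^ p.1 * qA K q ^ p.2) := by
    rw [map_finsuppSum]
    simp only [map_smul]
  rw [h3]
  exact h2

lemma pP_eval_self_ne_zero (hq : q ≠ 0) (hfree : ∀ n : ℤ, n ≠ 0 → qInt K q n ≠ 0) (j : ℕ) :
    (pP q j).eval (qInt K q j) ≠ 0 := by
  rw [pP_eval q hq]
  rw [Finset.prod_ne_zero_iff]
  intro r hr
  apply hfree
  have : r < j := Finset.mem_range.mp hr
  omega

lemma pP_eval_lt_eq_zero (hq : q ≠ 0) {j m : ℕ} (hm : m < j) :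
    (pP q j).eval (qInt K q m) = 0 := by
  rw [pP_eval q hq]
  apply Finset.prod_eq_zero (Finset.mem_range.mpr hm)
  rw [sub_self, qInt_zero]

lemma Dof_eq_zero (hq : q ≠ 0) (hfree : ∀ n : ℤ, n ≠ 0 → qInt K q n ≠ 0)
    {c : (ℕ × ℕ) →₀ K} (h : Dof q c = 0) : c = 0 := by
  by_contra hc
  obtain ⟨p₀, hp₀⟩ := Finsupp.support_nonempty_iff.mpr hc
  set t : ℤ := (p₀.1 : ℤ) - p₀.2 with ht
  set S := c.support.filter (fun p => (p.1 : ℤ) - p.2 = t) with hS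
  have hp₀S : p₀ ∈ S := by
    rw [hS, Finset.mem_filter]
    exact ⟨hp₀, rfl⟩
  have hJs : (S.image Prod.snd).Nonempty := ⟨p₀.2, Finset.mem_image_of_mem _ hp₀S⟩
  obtain ⟨pm, hpmS, hpm2⟩ := Finset.mem_image.mp ((S.image Prod.snd).min'_mem hJs)
  have hpm_supp : pm ∈ c.support := (Finset.mem_filter.mp hpmS).1
  have hpm_band : (pm.1 : ℤ) - pm.2 = t := (Finset.mem_filter.mp hpmS).2
  -- uniqueness of an element of S with second coordinate jm
  have huniq : ∀ p ∈ S, p.2 = pm.2 → p = pm := by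
    intro p hp hp2
    have hb : (p.1 : ℤ) - p.2 = t := (Finset.mem_filter.mp hp).2
    have : (p.1 : ℤ) = (pm.1 : ℤ) := by omega
    have h1 : p.1 = pm.1 := by exact_mod_cast this
    exact Prod.ext h1 hp2
  -- evaluate the band-t data at {jm}
  have h0 : ((Dof q c) t).eval (qInt K q pm.2) = 0 := by rw [h]; simp
  rw [Dof, Finsupp.sum, Finset.sum_apply', Polynomial.eval_finset_sum] at h0
  have hterm : ∀ p ∈ c.support, p ≠ pm →
      (((c p • Finsupp.single ((p.1 : ℤ) - p.2) (pP q p.2)) t).eval (qInt K q pm.2)) = 0 := by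
    intro p hp hpne
    by_cases hb : (p.1 : ℤ) - p.2 = t
    · have hpS : p ∈ S := by
        rw [hS, Finset.mem_filter]; exact ⟨hp, hb⟩
      have hge : pm.2 ≤ p.2 := by
        rw [hpm2]
        exact Finset.min'_le _ _ (Finset.mem_image_of_mem _ hpS)
      have hne2 : p.2 ≠ pm.2 := fun hE => hpne (huniq p hpS hE)
      have hlt : pm.2 < p.2 := lt_of_le_of_ne hge (fun hE => hne2 hE.symm)
      rw [Finsupp.smul_apply, Finsupp.single_apply, if_pos hb, Polynomial.eval_smul]
      rw [pP_eval_lt_eq_zero q hq hlt]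
      simp
    · rw [Finsupp.smul_apply, Finsupp.single_apply, if_neg hb]
      simp
  rw [Finset.sum_eq_single_of_mem pm hpm_supp hterm] at h0
  rw [Finsupp.smul_apply, Finsupp.single_apply, if_pos hpm_band, Polynomial.eval_smul] at h0
  rcases smul_eq_zero.mp h0 with h1 | h1
  · exact (Finsupp.mem_support_iff.mp hpm_supp) h1
  · exact pP_eval_self_ne_zero q hq hfree pm.2 h1

lemma rho_injective (hq : q ≠ 0) (hfree : ∀ n : ℤ, n ≠ 0 → qInt K q n ≠ 0) :
    Function.Injective (rho q hq) := by
  have h0 : ∀ x : qHeis K q, rho q hq x = 0 → x = 0 := by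
    intro x hx
    obtain ⟨c, hc⟩ := exists_expansion q hq x
    have hR : Rep q (rho q hq x) (Dof q c) := by
      rw [← hc]
      exact rep_expansion q hq c
    rw [hx] at hR
    have hD : Dof q c = 0 := rep_unique q hq hfree hR (rep_zero q)
    have hc0 : c = 0 := Dof_eq_zero q hq hfree hD
    rw [← hc, hc0, Finsupp.sum_zero_index]
  intro a b hab
  have : rho q hq (a - b) = 0 := by rw [map_sub, hab, sub_self]
  have := h0 _ this
  exact sub_eq_zero.mp this

end Injectivity

section TopBand

open Polynomial

open scoped Classical in
/-- Top band of band data (junk value `0` for `D = 0`). -/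
def sTop (D : ℤ →₀ Polynomial K) : ℤ :=
  if h : D = 0 then 0 else D.support.max' (Finsupp.support_nonempty_iff.mpr h)

/-- Degree of the polynomial in the top band. -/
def dTop (D : ℤ →₀ Polynomial K) : ℕ := (D (sTop D)).natDegree

lemma sTop_mem {D : ℤ →₀ Polynomial K} (h : D ≠ 0) : sTop D ∈ D.support := by
  unfold sTop
  rw [dif_neg h]
  exact Finset.max'_mem _ _

lemma le_sTop {D : ℤ →₀ Polynomial K} {t : ℤ} (ht : t ∈ D.support) : t ≤ sTop D := by
  have hD : D ≠ 0 := Finsupp.support_nonempty_iff.mp ⟨t, ht⟩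
  unfold sTop
  rw [dif_neg hD]
  exact Finset.le_max' _ _ ht

lemma top_ne_zero {D : ℤ →₀ Polynomial K} (h : D ≠ 0) : D (sTop D) ≠ 0 :=
  Finsupp.mem_support_iff.mp (sTop_mem h)

lemma comp_σp_ne_zero (hq : q ≠ 0) {p : Polynomial K} (hp : p ≠ 0) (s : ℤ) :
    p.comp (σp q s) ≠ 0 := by
  intro h0
  have hd : (σp q s).natDegree ≠ 0 := by rw [σp_natDegree q hq s]; norm_num
  have h1 := Polynomial.leadingCoeff_comp (p := p) (q := σp q s) hd
  rw [h0, leadingCoeff_zero] at h1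
  rcases mul_eq_zero.mp h1.symm with h2 | h2
  · exact (leadingCoeff_ne_zero.mpr hp) h2
  · exact pow_ne_zero _ (leadingCoeff_ne_zero.mpr (σp_ne_zero q hq s)) h2

lemma comp_σp_natDegree (hq : q ≠ 0) (p : Polynomial K) (s : ℤ) :
    (p.comp (σp q s)).natDegree = p.natDegree := by
  rw [Polynomial.natDegree_comp, σp_natDegree q hq, mul_one]

lemma conv_apply_of_top {D E : ℤ →₀ Polynomial K} (hD : D ≠ 0) (hE : E ≠ 0) :
    (conv q D E) (sTop D + sTop E) = E (sTop E) * (D (sTop D)).comp (σp q (sTop E)) := by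
  rw [conv, Finsupp.sum, Finset.sum_apply']
  rw [Finset.sum_eq_single_of_mem (sTop E) (sTop_mem hE)]
  · rw [Finsupp.sum, Finset.sum_apply']
    rw [Finset.sum_eq_single_of_mem (sTop D) (sTop_mem hD)]
    · rw [Finsupp.single_apply, if_pos (add_comm (sTop E) (sTop D))]
    · intro m hm hmne
      rw [Finsupp.single_apply, if_neg]
      have := le_sTop hm
      omega
  · intro s hs hsne
    rw [Finsupp.sum, Finset.sum_apply']
    apply Finset.sum_eq_zero
    intro m hm
    rw [Finsupp.single_apply, if_neg]
    have h1 := le_sTop hs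
    have h2 := le_sTop hm
    omega

lemma conv_apply_of_gt {D E : ℤ →₀ Polynomial K} {t : ℤ} (ht : sTop D + sTop E < t) :
    (conv q D E) t = 0 := by
  rw [conv, Finsupp.sum, Finset.sum_apply']
  apply Finset.sum_eq_zero
  intro s hs
  rw [Finsupp.sum, Finset.sum_apply']
  apply Finset.sum_eq_zero
  intro m hm
  rw [Finsupp.single_apply, if_neg]
  have h1 := le_sTop hs
  have h2 := le_sTop hm
  omega

lemma conv_top_ne_zero (hq : q ≠ 0) {D E : ℤ →₀ Polynomial K} (hD : D ≠ 0) (hE : E ≠ 0) :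
    (conv q D E) (sTop D + sTop E) ≠ 0 := by
  rw [conv_apply_of_top q hD hE]
  exact mul_ne_zero (top_ne_zero hE) (comp_σp_ne_zero q hq (top_ne_zero hD) _)

lemma conv_ne_zero (hq : q ≠ 0) {D E : ℤ →₀ Polynomial K} (hD : D ≠ 0) (hE : E ≠ 0) :
    conv q D E ≠ 0 := by
  intro h0
  apply conv_top_ne_zero q hq hD hE
  rw [h0]
  simp

lemma sTop_conv (hq : q ≠ 0) {D E : ℤ →₀ Polynomial K} (hD : D ≠ 0) (hE : E ≠ 0) :
    sTop (conv q D E) = sTop D + sTop E := by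
  apply le_antisymm
  · by_contra hcon
    push_neg at hcon
    have h1 := top_ne_zero (conv_ne_zero q hq hD hE)
    exact h1 (conv_apply_of_gt q hcon)
  · exact le_sTop (Finsupp.mem_support_iff.mpr (conv_top_ne_zero q hq hD hE))

lemma dTop_conv (hq : q ≠ 0) {D E : ℤ →₀ Polynomial K} (hD : D ≠ 0) (hE : E ≠ 0) :
    dTop (conv q D E) = dTop D + dTop E := by
  rw [dTop, sTop_conv q hq hD hE, conv_apply_of_top q hD hE,
    Polynomial.natDegree_mul (top_ne_zero hE) (comp_σp_ne_zero q hq (top_ne_zero hD) _),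
    comp_σp_natDegree q hq]
  rw [dTop, dTop, add_comm]

/-- `x` is a nonzero banded operator with top band `s` and top degree `d`. -/
def HasTop (x : Module.End K (qV K)) (s : ℤ) (d : ℕ) : Prop :=
  ∃ D, Rep q x D ∧ D ≠ 0 ∧ sTop D = s ∧ dTop D = d

lemma hasTop_mul (hq : q ≠ 0) {x y : Module.End K (qV K)} {s s' : ℤ} {d d' : ℕ}
    (hx : HasTop q x s d) (hy : HasTop q y s' d') : HasTop q (x * y) (s + s') (d + d') := by
  obtain ⟨D, hD, hD0, hDs, hDd⟩ := hx
  obtain ⟨E, hE, hE0, hEs, hEd⟩ := hy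
  exact ⟨conv q D E, rep_mul q hq hD hE, conv_ne_zero q hq hD0 hE0,
    by rw [sTop_conv q hq hD0 hE0, hDs, hEs],
    by rw [dTop_conv q hq hD0 hE0, hDd, hEd]⟩

lemma hasTop_pow (hq : q ≠ 0) {x : Module.End K (qV K)} {s : ℤ} {d : ℕ}
    (h : HasTop q x s d) (k : ℕ) :
    HasTop q (x ^ (k + 1)) ((k + 1 : ℕ) * s) ((k + 1) * d) := by
  induction k with
  | zero => simpa using h
  | succ k ih =>
    have h2 := hasTop_mul q hq ih h
    rw [← pow_succ] at h2
    have hs : ((k + 1 : ℕ) : ℤ) * s + s = ((k + 1 + 1 : ℕ) : ℤ) * s := by push_cast; ring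
    have hd : (k + 1) * d + d = (k + 1 + 1) * d := by ring
    rwa [hs, hd] at h2

section FunEq

lemma σp_zero : σp q 0 = X := by
  rw [σp, qInt_zero]
  simp

lemma σp_comp (hq : q ≠ 0) (a b : ℤ) : (σp q a).comp (σp q b) = σp q (a + b) := by
  have h1 : qInt K q (a + b) = q ^ a * qInt K q b + qInt K q a := by
    rw [add_comm, qInt_add q hq b a]
  have h2 : (q : K) ^ (a + b) = q ^ a * q ^ b := zpow_add₀ hq a b
  simp only [σp, add_comp, mul_comp, C_comp, X_comp, h1, h2, C_mul, C_add]
  ring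

lemma funeq_iterate (hq : q ≠ 0) {F G : Polynomial K} (hG : G ≠ 0) {N : ℤ}
    (h : F * G.comp (σp q N) = G * F.comp (σp q N)) (k : ℕ) :
    F * G.comp (σp q (k * N)) = G * F.comp (σp q (k * N)) := by
  induction k with
  | zero =>
    have h0 : ((0 : ℕ) : ℤ) * N = 0 := by norm_num
    rw [h0, σp_zero, Polynomial.comp_X, Polynomial.comp_X, mul_comm]
  | succ k ih =>
    have comp1 := congrArg (fun p => p.comp (σp q ((k : ℤ) * N))) h
    simp only [mul_comp, comp_assoc, σp_comp q hq] at comp1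
    have harg : N + (k : ℤ) * N = ((k + 1 : ℕ) : ℤ) * N := by push_cast; ring
    rw [harg] at comp1
    apply mul_left_cancel₀ (comp_σp_ne_zero q hq hG ((k : ℤ) * N))
    linear_combination (G.comp (σp q (((k + 1 : ℕ) : ℤ) * N))) * ih + G * comp1

lemma natDegree_eq_of_funeq (hq : q ≠ 0) (hfree : ∀ n : ℤ, n ≠ 0 → qInt K q n ≠ 0)
    {F G : Polynomial K} (hF : F ≠ 0) (hG : G ≠ 0) {N : ℤ} (hN : N ≠ 0)
    (h : F * G.comp (σp q N) = G * F.comp (σp q N)) : F.natDegree = G.natDegree := by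
  have hFG : F * G ≠ 0 := mul_ne_zero hF hG
  have hex : ∃ n₀ : ℤ, (F * G).eval (qInt K q n₀) ≠ 0 := by
    by_contra hcon
    push_neg at hcon
    exact hFG (poly_eq_zero_of_qInt_roots q hq hfree hcon)
  obtain ⟨n₀, hn₀⟩ := hex
  rw [Polynomial.eval_mul] at hn₀
  have hFn : F.eval (qInt K q n₀) ≠ 0 := fun h' => hn₀ (by rw [h', zero_mul])
  have hGn : G.eval (qInt K q n₀) ≠ 0 := fun h' => hn₀ (by rw [h', mul_zero])
  set lam := F.eval (qInt K q n₀) / G.eval (qInt K q n₀) with hlam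
  have hlam0 : lam ≠ 0 := div_ne_zero hFn hGn
  have hroots : ∀ k : ℕ, (F - lam • G).eval (qInt K q (n₀ + k * N)) = 0 := by
    intro k
    have hk := congrArg (Polynomial.eval (qInt K q n₀)) (funeq_iterate q hq hG h k)
    simp only [Polynomial.eval_mul, Polynomial.eval_comp, σp_eval q hq] at hk
    rw [Polynomial.eval_sub, Polynomial.eval_smul, hlam]
    rw [smul_eq_mul, sub_eq_zero, div_mul_eq_mul_div, eq_div_iff hGn]
    linear_combination -hk
  have hzero : F - lam • G = 0 := by
    apply Polynomial.eq_zero_of_infinite_isRoot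
    apply Set.infinite_of_injective_forall_mem
      (f := fun k : ℕ => qInt K q (n₀ + (k : ℤ) * N))
    · intro k k' hkk'
      have h1 := qInt_injective q hq hfree hkk'
      have h2 : (k : ℤ) * N = (k' : ℤ) * N := by
        have := add_left_cancel h1
        exact this
      have h3 := mul_right_cancel₀ hN h2
      exact_mod_cast h3
    · intro k
      exact hroots k
  have hFlam : F = lam • G := sub_eq_zero.mp hzero
  rw [hFlam, Polynomial.smul_eq_C_mul, Polynomial.natDegree_C_mul hlam0]

end FunEq

lemma top_equation (hq : q ≠ 0) (hfree : ∀ n : ℤ, n ≠ 0 → qInt K q n ≠ 0)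
    {x y : Module.End K (qV K)} {Dx Dy : ℤ →₀ Polynomial K}
    (hxy : x * y = y * x) (hx : Rep q x Dx) (hy : Rep q y Dy)
    (hDx : Dx ≠ 0) (hDy : Dy ≠ 0) :
    Dy (sTop Dy) * (Dx (sTop Dx)).comp (σp q (sTop Dy)) =
      Dx (sTop Dx) * (Dy (sTop Dy)).comp (σp q (sTop Dx)) := by
  have hA : Rep q (x * y) (conv q Dx Dy) := rep_mul q hq hx hy
  have hB : Rep q (x * y) (conv q Dy Dx) := by
    rw [hxy]
    exact rep_mul q hq hy hx
  have h1 := rep_unique q hq hfree hA hB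
  have h2 := congrArg (fun F => F (sTop Dx + sTop Dy)) h1
  rw [conv_apply_of_top q hDx hDy, add_comm (sTop Dx) (sTop Dy),
    conv_apply_of_top q hDy hDx] at h2
  exact h2

lemma deg_top_zero_band (hq : q ≠ 0) (hfree : ∀ n : ℤ, n ≠ 0 → qInt K q n ≠ 0)
    {x y : Module.End K (qV K)} {Dx Dy : ℤ →₀ Polynomial K}
    (hxy : x * y = y * x) (hx : Rep q x Dx) (hy : Rep q y Dy)
    (hDx : Dx ≠ 0) (hDy : Dy ≠ 0) (hsx : sTop Dx = 0) (hsy : sTop Dy ≠ 0) :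
    dTop Dx = 0 := by
  have h2 := top_equation q hq hfree hxy hx hy hDx hDy
  rw [hsx, σp_zero, Polynomial.comp_X] at h2
  -- h2 : Dy(sy) * Dx0 = Dx0 * Dy(sy)∘σ_0 ... careful: σp (sTop Dx) = σp 0 on RHS
  -- After rw: Dy(sy) * Dx0.comp (σp sy) = Dx0 * Dy(sy)  (comp_X applied to RHS)
  have h3 : (Dx 0).comp (σp q (sTop Dy)) = Dx 0 := by
    apply mul_left_cancel₀ (top_ne_zero hDy)
    rw [h2]
    ring
  have h4 : Dx 0 * (1 : Polynomial K).comp (σp q (sTop Dy)) =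
      1 * (Dx 0).comp (σp q (sTop Dy)) := by
    rw [Polynomial.one_comp, mul_one, one_mul, h3]
  have h5 := natDegree_eq_of_funeq q hq hfree (by rw [← hsx]; exact top_ne_zero hDx)
    (one_ne_zero) hsy h4
  rw [dTop, hsx]
  rw [h5, Polynomial.natDegree_one]

lemma deg_ratio (hq : q ≠ 0) (hfree : ∀ n : ℤ, n ≠ 0 → qInt K q n ≠ 0)
    {x y : Module.End K (qV K)} {Dx Dy : ℤ →₀ Polynomial K}
    (hxy : x * y = y * x) (hx : Rep q x Dx) (hy : Rep q y Dy)
    (hDx : Dx ≠ 0) (hDy : Dy ≠ 0) {a b : ℕ} (ha : 0 < a) (hb : 0 < b)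
    (hab : (a : ℤ) * sTop Dx = (b : ℤ) * sTop Dy)
    (hN0 : (a : ℤ) * sTop Dx ≠ 0) :
    a * dTop Dx = b * dTop Dy := by
  obtain ⟨D', hD', hD'0, hD's, hD'd⟩ := by
    have := hasTop_pow q hq (⟨Dx, hx, hDx, rfl, rfl⟩ : HasTop q x (sTop Dx) (dTop Dx)) (a - 1)
    rwa [Nat.sub_add_cancel ha] at this
  obtain ⟨E', hE', hE'0, hE's, hE'd⟩ := by
    have := hasTop_pow q hq (⟨Dy, hy, hDy, rfl, rfl⟩ : HasTop q y (sTop Dy) (dTop Dy)) (b - 1)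
    rwa [Nat.sub_add_cancel hb] at this
  have hc : (x ^ a) * (y ^ b) = (y ^ b) * (x ^ a) := Commute.pow_pow hxy a b
  have h2 := top_equation q hq hfree hc hD' hE' hD'0 hE'0
  have hss : sTop E' = sTop D' := by rw [hD's, hE's, hab]
  rw [hss] at h2
  have h5 := natDegree_eq_of_funeq q hq hfree
    (show E' (sTop D') ≠ 0 by rw [← hss]; exact top_ne_zero hE'0)
    (top_ne_zero hD'0)
    (show sTop D' ≠ 0 by rw [hD's]; exact hN0) h2
  have h6 : dTop E' = dTop D' := by
    rw [dTop, dTop, hss]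
    exact h5
  rw [hD'd, hE'd] at h6
  exact h6.symm

lemma det_zero (hq : q ≠ 0) (hfree : ∀ n : ℤ, n ≠ 0 → qInt K q n ≠ 0)
    {x y : Module.End K (qV K)} {Dx Dy : ℤ →₀ Polynomial K}
    (hxy : x * y = y * x) (hx : Rep q x Dx) (hy : Rep q y Dy)
    (hDx : Dx ≠ 0) (hDy : Dy ≠ 0) :
    sTop Dx * (dTop Dy : ℤ) = sTop Dy * (dTop Dx : ℤ) := by
  have hyx : y * x = x * y := hxy.symm
  have mixed : ∀ (x' y' : Module.End K (qV K)) (Dx' Dy' : ℤ →₀ Polynomial K),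
      x' * y' = y' * x' → Rep q x' Dx' → Rep q y' Dy' → Dx' ≠ 0 → Dy' ≠ 0 →
      sTop Dx' < 0 → 0 < sTop Dy' → dTop Dx' = 0 ∧ dTop Dy' = 0 := by
    intro x' y' Dx' Dy' hxy' hx' hy' hDx' hDy' h1 h2
    set a : ℕ := (sTop Dy').natAbs with haeq
    set b : ℕ := (sTop Dx').natAbs with hbeq
    have hA : ((a : ℕ) : ℤ) = sTop Dy' := Int.natAbs_of_nonneg (le_of_lt h2)
    have hB : ((b : ℕ) : ℤ) = -sTop Dx' := Int.ofNat_natAbs_of_nonpos (le_of_lt h1)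
    have ha : 0 < a := by omega
    have hb : 0 < b := by omega
    obtain ⟨D', hD', hD'0, hD's, hD'd⟩ := by
      have := hasTop_pow q hq (⟨Dx', hx', hDx', rfl, rfl⟩ :
        HasTop q x' (sTop Dx') (dTop Dx')) (a - 1)
      rwa [Nat.sub_add_cancel ha] at this
    obtain ⟨E', hE', hE'0, hE's, hE'd⟩ := by
      have := hasTop_pow q hq (⟨Dy', hy', hDy', rfl, rfl⟩ :
        HasTop q y' (sTop Dy') (dTop Dy')) (b - 1)
      rwa [Nat.sub_add_cancel hb] at this
    have hzrep : Rep q ((x' ^ a) * (y' ^ b)) (conv q D' E') := rep_mul q hq hD' hE'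
    have hz0 : conv q D' E' ≠ 0 := conv_ne_zero q hq hD'0 hE'0
    have hzs : sTop (conv q D' E') = 0 := by
      rw [sTop_conv q hq hD'0 hE'0, hD's, hE's, hA, hB]
      ring
    have hcz : ((x' ^ a) * (y' ^ b)) * x' = x' * ((x' ^ a) * (y' ^ b)) := by
      have c1 : Commute x' (x' ^ a) := Commute.pow_right (Commute.refl x') a
      have c2 : Commute x' (y' ^ b) := Commute.pow_right hxy' b
      exact (Commute.mul_right c1 c2).symm
    have hdz := deg_top_zero_band q hq hfree hcz hzrep hx' hz0 hDx' hzs (by omega)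
    rw [dTop_conv q hq hD'0 hE'0, hD'd, hE'd] at hdz
    obtain ⟨hz1, hz2⟩ := Nat.add_eq_zero.mp hdz
    constructor
    · rcases Nat.mul_eq_zero.mp hz1 with h | h
      · omega
      · exact h
    · rcases Nat.mul_eq_zero.mp hz2 with h | h
      · omega
      · exact h
  rcases lt_trichotomy (sTop Dx) 0 with h1 | h1 | h1 <;>
    rcases lt_trichotomy (sTop Dy) 0 with h2 | h2 | h2
  · -- both negative
    have hA : (((sTop Dy).natAbs : ℕ) : ℤ) = -sTop Dy :=
      Int.ofNat_natAbs_of_nonpos (le_of_lt h2)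
    have hB : (((sTop Dx).natAbs : ℕ) : ℤ) = -sTop Dx :=
      Int.ofNat_natAbs_of_nonpos (le_of_lt h1)
    have hthis := deg_ratio q hq hfree hxy hx hy hDx hDy
      (a := (sTop Dy).natAbs) (b := (sTop Dx).natAbs)
      (by omega) (by omega)
      (by rw [hA, hB]; ring)
      (by rw [hA]; exact mul_ne_zero (by omega) (by omega))
    have hcast : (((sTop Dy).natAbs : ℕ) : ℤ) * (dTop Dx : ℤ) =
        (((sTop Dx).natAbs : ℕ) : ℤ) * (dTop Dy : ℤ) := by exact_mod_cast hthis
    rw [hA, hB] at hcast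
    linear_combination hcast
  · -- x negative, y zero
    have := deg_top_zero_band q hq hfree hyx hy hx hDy hDx h2 (by omega)
    rw [h2, this]
    simp
  · -- x negative, y positive
    obtain ⟨hd1, hd2⟩ := mixed x y Dx Dy hxy hx hy hDx hDy h1 h2
    rw [hd1, hd2]
    simp
  · -- x zero, y negative
    have := deg_top_zero_band q hq hfree hxy hx hy hDx hDy h1 (by omega)
    rw [h1, this]
    simp
  · -- both zero
    rw [h1, h2]
    simp
  · -- x zero, y positive
    have := deg_top_zero_band q hq hfree hxy hx hy hDx hDy h1 (by omega)
    rw [h1, this]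
    simp
  · -- x positive, y negative
    obtain ⟨hd2, hd1⟩ := mixed y x Dy Dx hyx hy hx hDy hDx h2 h1
    rw [hd1, hd2]
    simp
  · -- x positive, y zero
    have := deg_top_zero_band q hq hfree hyx hy hx hDy hDx h2 (by omega)
    rw [h2, this]
    simp
  · -- both positive
    have hA : (((sTop Dy).natAbs : ℕ) : ℤ) = sTop Dy :=
      Int.natAbs_of_nonneg (le_of_lt h2)
    have hB : (((sTop Dx).natAbs : ℕ) : ℤ) = sTop Dx :=
      Int.natAbs_of_nonneg (le_of_lt h1)
    have hthis := deg_ratio q hq hfree hxy hx hy hDx hDy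
      (a := (sTop Dy).natAbs) (b := (sTop Dx).natAbs)
      (by omega) (by omega)
      (by rw [hA, hB]; ring)
      (by rw [hA]; exact mul_ne_zero (by omega) (by omega))
    have hcast : (((sTop Dy).natAbs : ℕ) : ℤ) * (dTop Dx : ℤ) =
        (((sTop Dx).natAbs : ℕ) : ℤ) * (dTop Dy : ℤ) := by exact_mod_cast hthis
    rw [hA, hB] at hcast
    linear_combination -hcast

end TopBand

section Bounds

open Polynomial

lemma rep_add {x y : Module.End K (qV K)} {D E : ℤ →₀ Polynomial K}
    (hx : Rep q x D) (hy : Rep q y E) : Rep q (x + y) (D + E) := by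
  intro n
  rw [LinearMap.add_apply, hx n, hy n, map_add]

lemma rep_smul (c : K) {x : Module.End K (qV K)} {D : ℤ →₀ Polynomial K}
    (hx : Rep q x D) : Rep q (c • x) (c • D) := by
  intro n
  rw [LinearMap.smul_apply, hx n, map_smul]

lemma rep_sub {x y : Module.End K (qV K)} {D E : ℤ →₀ Polynomial K}
    (hx : Rep q x D) (hy : Rep q y E) : Rep q (x - y) (D - E) := by
  intro n
  rw [LinearMap.sub_apply, hx n, hy n, map_sub]

lemma rep_one : Rep q (1 : Module.End K (qV K)) (Finsupp.single 0 1) := by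
  intro n
  rw [Module.End.one_apply, repSumL_single]
  simp

/-- Quantitatively bounded banded operator. -/
def Bdd (b : ℕ) (x : Module.End K (qV K)) : Prop :=
  ∃ D, Rep q x D ∧ (∀ t ∈ D.support, t.natAbs ≤ b) ∧ (∀ t, (D t).natDegree ≤ b)

lemma Bdd_mono {b b' : ℕ} (hbb : b ≤ b') {x : Module.End K (qV K)} (h : Bdd q b x) :
    Bdd q b' x := by
  obtain ⟨D, h1, h2, h3⟩ := h
  exact ⟨D, h1, fun t ht => le_trans (h2 t ht) hbb, fun t => le_trans (h3 t) hbb⟩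

lemma Bdd_zero (b : ℕ) : Bdd q b (0 : Module.End K (qV K)) := by
  refine ⟨0, rep_zero q, ?_, ?_⟩
  · intro t ht
    simp at ht
  · intro t
    simp

lemma Bdd_one (b : ℕ) : Bdd q b (1 : Module.End K (qV K)) := by
  refine ⟨Finsupp.single 0 1, rep_one q, ?_, ?_⟩
  · intro t ht
    have := Finsupp.support_single_subset ht
    simp only [Finset.mem_singleton] at this
    subst this
    simp
  · intro t
    rw [Finsupp.single_apply]
    split <;> simp

lemma Bdd_add {b : ℕ} {x y : Module.End K (qV K)} (hx : Bdd q b x) (hy : Bdd q b y) :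
    Bdd q b (x + y) := by
  classical
  obtain ⟨D, hD1, hD2, hD3⟩ := hx
  obtain ⟨E, hE1, hE2, hE3⟩ := hy
  refine ⟨D + E, rep_add q hD1 hE1, ?_, ?_⟩
  · intro t ht
    rcases Finset.mem_union.mp (Finsupp.support_add ht) with h | h
    · exact hD2 t h
    · exact hE2 t h
  · intro t
    rw [Finsupp.add_apply]
    exact le_trans (Polynomial.natDegree_add_le _ _) (by simp [hD3 t, hE3 t])

lemma Bdd_smul {b : ℕ} (c : K) {x : Module.End K (qV K)} (hx : Bdd q b x) :
    Bdd q b (c • x) := by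
  obtain ⟨D, hD1, hD2, hD3⟩ := hx
  refine ⟨c • D, rep_smul q c hD1, ?_, ?_⟩
  · intro t ht
    exact hD2 t (Finsupp.support_smul ht)
  · intro t
    rw [Finsupp.smul_apply]
    exact le_trans (Polynomial.natDegree_smul_le _ _) (hD3 t)

lemma conv_mem_support {D E : ℤ →₀ Polynomial K} {t : ℤ}
    (ht : t ∈ (conv q D E).support) : ∃ s ∈ E.support, ∃ m ∈ D.support, t = s + m := by
  classical
  rw [conv] at ht
  have h1 := Finsupp.support_sum ht
  rw [Finset.mem_biUnion] at h1
  obtain ⟨s, hs, hts⟩ := h1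
  have h2 := Finsupp.support_sum hts
  rw [Finset.mem_biUnion] at h2
  obtain ⟨m, hm, htm⟩ := h2
  have h3 := Finsupp.support_single_subset htm
  rw [Finset.mem_singleton] at h3
  exact ⟨s, hs, m, hm, h3⟩

lemma Bdd_mul (hq : q ≠ 0) {b b' : ℕ} {x y : Module.End K (qV K)}
    (hx : Bdd q b x) (hy : Bdd q b' y) : Bdd q (b + b') (x * y) := by
  obtain ⟨D, hD1, hD2, hD3⟩ := hx
  obtain ⟨E, hE1, hE2, hE3⟩ := hy
  refine ⟨conv q D E, rep_mul q hq hD1 hE1, ?_, ?_⟩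
  · intro t ht
    obtain ⟨s, hs, m, hm, rfl⟩ := conv_mem_support q ht
    have := hE2 s hs
    have := hD2 m hm
    have := Int.natAbs_add_le s m
    omega
  · intro t
    rw [conv, Finsupp.sum, Finset.sum_apply']
    apply Polynomial.natDegree_sum_le_of_forall_le
    intro s hs
    rw [Finsupp.sum, Finset.sum_apply']
    apply Polynomial.natDegree_sum_le_of_forall_le
    intro m hm
    rw [Finsupp.single_apply]
    split
    · refine le_trans Polynomial.natDegree_mul_le ?_
      have h2 : ((D m).comp (σp q s)).natDegree ≤ b := by
        rw [comp_σp_natDegree q hq]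
        exact hD3 m
      have h3 := hE3 s
      omega
    · simp

lemma Bdd_pow (hq : q ≠ 0) {a : ℕ} {x : Module.End K (qV K)} (hx : Bdd q a x) (k : ℕ) :
    Bdd q (k * a) (x ^ k) := by
  induction k with
  | zero => simpa using Bdd_one q 0
  | succ k ih =>
    have h1 := Bdd_mul q hq ih hx
    rw [← pow_succ] at h1
    have h2 : k * a + a = (k + 1) * a := by ring
    rwa [h2] at h1

lemma Bdd_rho (hq : q ≠ 0) (x : qHeis K q) : ∃ b : ℕ, Bdd q b (rho q hq x) := by
  classical
  obtain ⟨c, hc⟩ := exists_expansion q hq x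
  set b := c.support.sup (fun p => max ((p.1 : ℤ) - p.2).natAbs p.2) with hb
  refine ⟨b, Dof q c, ?_, ?_, ?_⟩
  · rw [← hc]
    exact rep_expansion q hq c
  · intro t ht
    rw [Dof] at ht
    have h1 := Finsupp.support_sum ht
    rw [Finset.mem_biUnion] at h1
    obtain ⟨p, hp, htp⟩ := h1
    have h2 := Finsupp.support_smul htp
    have h3 := Finsupp.support_single_subset h2
    rw [Finset.mem_singleton] at h3
    subst h3
    calc ((p.1 : ℤ) - p.2).natAbs ≤ max ((p.1 : ℤ) - p.2).natAbs p.2 := le_max_left _ _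
    _ ≤ b := Finset.le_sup (f := fun p : ℕ × ℕ => max ((p.1 : ℤ) - p.2).natAbs p.2) hp
  · intro t
    rw [Dof, Finsupp.sum, Finset.sum_apply']
    apply Polynomial.natDegree_sum_le_of_forall_le
    intro p hp
    rw [Finsupp.smul_apply, Finsupp.single_apply]
    refine le_trans (Polynomial.natDegree_smul_le _ _) ?_
    split
    · rw [pP_natDegree q hq]
      calc p.2 ≤ max ((p.1 : ℤ) - p.2).natAbs p.2 := le_max_right _ _
      _ ≤ b := Finset.le_sup (f := fun p : ℕ × ℕ => max ((p.1 : ℤ) - p.2).natAbs p.2) hp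
    · simp

end Bounds

section DimLemma

variable {M : Type*} [AddCommGroup M] [Module K M]

lemma dim_le_card (ν : M → ℤ ×ₗ ℕ) :
    ∀ (n : ℕ) (Γ : Finset (ℤ ×ₗ ℕ)), Γ.card ≤ n →
    ∀ (W : Submodule K M), FiniteDimensional K W →
    (∀ x ∈ W, x ≠ 0 → ν x ∈ Γ) →
    (∀ x ∈ W, ∀ y ∈ W, x ≠ 0 → y ≠ 0 → x + y ≠ 0 → ν (x + y) ≤ max (ν x) (ν y)) →
    (∀ x ∈ W, ∀ c : K, c ≠ 0 → ν (c • x) = ν x) →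
    (∀ x ∈ W, ∀ y ∈ W, x ≠ 0 → y ≠ 0 → ν x = ν y →
      ∃ c : K, x - c • y = 0 ∨ ((x - c • y) ≠ 0 ∧ ν (x - c • y) < ν x)) →
    Module.finrank K W ≤ Γ.card := by
  intro n
  induction n with
  | zero =>
    intro Γ hΓ W _ hmem _ _ _
    have hΓ0 : Γ = ∅ := Finset.card_eq_zero.mp (Nat.le_zero.mp hΓ)
    have hW : W = ⊥ := by
      rw [eq_bot_iff]
      intro x hx
      by_contra hx0
      have hx0' : x ≠ 0 := by simpa using hx0
      have := hmem x hx hx0'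
      rw [hΓ0] at this
      exact absurd this (Finset.notMem_empty _)
    rw [hW]
    simp
  | succ n ih =>
    intro Γ hΓ W hfd hmem hadd hsmul helim
    by_cases hΓ0 : Γ = ∅
    · have hW : W = ⊥ := by
        rw [eq_bot_iff]
        intro x hx
        by_contra hx0
        have hx0' : x ≠ 0 := by simpa using hx0
        have := hmem x hx hx0'
        rw [hΓ0] at this
        exact absurd this (Finset.notMem_empty _)
      rw [hW]
      simp
    have hne : Γ.Nonempty := Finset.nonempty_iff_ne_empty.mpr hΓ0
    set γ := Γ.max' hne with hγ
    set W' : Submodule K M :=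
      { carrier := {x | x ∈ W ∧ (x = 0 ∨ ν x < γ)}
        zero_mem' := ⟨W.zero_mem, Or.inl rfl⟩
        add_mem' := by
          rintro a b ⟨haW, ha⟩ ⟨hbW, hb⟩
          refine ⟨W.add_mem haW hbW, ?_⟩
          by_cases h0 : a + b = 0
          · exact Or.inl h0
          right
          by_cases ha0 : a = 0
          · rw [ha0, zero_add]
            rw [ha0, zero_add] at h0
            rcases hb with rfl | hb
            · exact absurd rfl h0
            · exact hb
          by_cases hb0 : b = 0
          · rw [hb0, add_zero]
            rcases ha with rfl | ha
            · exact absurd rfl ha0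
            · exact ha
          rcases ha with rfl | ha
          · exact absurd rfl ha0
          rcases hb with rfl | hb
          · exact absurd rfl hb0
          exact lt_of_le_of_lt (hadd a haW b hbW ha0 hb0 h0) (max_lt ha hb)
        smul_mem' := by
          rintro c a ⟨haW, ha⟩
          refine ⟨W.smul_mem c haW, ?_⟩
          by_cases hc : c = 0
          · rw [hc, zero_smul]
            exact Or.inl rfl
          rcases ha with rfl | ha
          · rw [smul_zero]
            exact Or.inl rfl
          · rw [hsmul a haW c hc]
            exact Or.inr ha } with hW'def
    have hW'le : W' ≤ W := fun x hx => hx.1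
    haveI : FiniteDimensional K W' := Submodule.finiteDimensional_of_le hW'le
    have hmem' : ∀ x ∈ W', x ≠ 0 → ν x ∈ Γ.erase γ := by
      intro x hx hx0
      rcases hx.2 with rfl | hlt
      · exact absurd rfl hx0
      · exact Finset.mem_erase.mpr ⟨ne_of_lt hlt, hmem x (hW'le hx) hx0⟩
    have hcard' : (Γ.erase γ).card ≤ n := by
      rw [Finset.card_erase_of_mem (Γ.max'_mem hne)]
      have h1 : 1 ≤ Γ.card := Finset.card_pos.mpr hne
      omega
    have hrank' : Module.finrank K W' ≤ (Γ.erase γ).card :=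
      ih (Γ.erase γ) hcard' W' inferInstance hmem'
        (fun x hx y hy => hadd x (hW'le hx) y (hW'le hy))
        (fun x hx => hsmul x (hW'le hx))
        (fun x hx y hy => helim x (hW'le hx) y (hW'le hy))
    have hcardγ : Γ.card = (Γ.erase γ).card + 1 := by
      rw [Finset.card_erase_of_mem (Γ.max'_mem hne)]
      have h1 : 1 ≤ Γ.card := Finset.card_pos.mpr hne
      omega
    by_cases hex : ∃ y, y ∈ W ∧ y ≠ 0 ∧ ν y = γ
    · obtain ⟨y, hyW, hy0, hyν⟩ := hex
      haveI : FiniteDimensional K (Submodule.span K {y}) :=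
        FiniteDimensional.span_of_finite K (Set.finite_singleton y)
      have hsub : W ≤ W' ⊔ Submodule.span K {y} := by
        intro x hx
        by_cases hx0 : x = 0
        · rw [hx0]
          exact Submodule.zero_mem _
        have hνx : ν x ≤ γ := Finset.le_max' Γ _ (hmem x hx hx0)
        rcases lt_or_eq_of_le hνx with hlt | heq
        · exact Submodule.mem_sup_left ⟨hx, Or.inr hlt⟩
        · obtain ⟨c, hc⟩ := helim x hx y hyW hx0 hy0 (by rw [heq, hyν])
          rcases hc with hczero | ⟨hcne, hclt⟩
          · have hxy : x = c • y := by rwa [sub_eq_zero] at hczero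
            rw [hxy]
            exact Submodule.mem_sup_right
              (Submodule.smul_mem _ c (Submodule.mem_span_singleton_self y))
          · have h1 : x - c • y ∈ W' :=
              ⟨Submodule.sub_mem W hx (Submodule.smul_mem W c hyW),
               Or.inr (by rw [← heq]; exact hclt)⟩
            have hxs : x = (x - c • y) + c • y := (sub_add_cancel x (c • y)).symm
            rw [hxs]
            exact Submodule.add_mem _ (Submodule.mem_sup_left h1)
              (Submodule.mem_sup_right
                (Submodule.smul_mem _ c (Submodule.mem_span_singleton_self y)))
      have hr1 : Module.finrank K W ≤ Module.finrank K ↥(W' ⊔ Submodule.span K {y}) :=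
        Submodule.finrank_mono hsub
      have hr2 := Submodule.finrank_sup_add_finrank_inf_eq W' (Submodule.span K {y})
      have hr3 : Module.finrank K ↥(Submodule.span K {y}) = 1 := finrank_span_singleton hy0
      omega
    · have hsub : W ≤ W' := by
        intro x hx
        by_cases hx0 : x = 0
        · rw [hx0]
          exact Submodule.zero_mem _
        have hνx : ν x ≤ γ := Finset.le_max' Γ _ (hmem x hx hx0)
        rcases lt_or_eq_of_le hνx with hlt | heq
        · exact ⟨hx, Or.inr hlt⟩
        · exact absurd ⟨x, hx, hx0, heq⟩ hex
      have hr1 : Module.finrank K W ≤ Module.finrank K W' :=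
        Submodule.finrank_mono hsub
      omega

end DimLemma

section Nu

open Polynomial

open scoped Classical in
/-- Canonical band data of an operator (zero if none exists). -/
noncomputable def theD (x : Module.End K (qV K)) : ℤ →₀ Polynomial K :=
  if h : ∃ D, Rep q x D then h.choose else 0

lemma theD_spec {x : Module.End K (qV K)} (h : ∃ D, Rep q x D) : Rep q x (theD q x) := by
  unfold theD
  rw [dif_pos h]
  exact h.choose_spec

lemma theD_eq (hq : q ≠ 0) (hfree : ∀ n : ℤ, n ≠ 0 → qInt K q n ≠ 0)
    {x : Module.End K (qV K)} {D : ℤ →₀ Polynomial K} (h : Rep q x D) : theD q x = D :=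
  rep_unique q hq hfree (theD_spec q ⟨D, h⟩) h

lemma theD_ne_zero (hq : q ≠ 0) (hfree : ∀ n : ℤ, n ≠ 0 → qInt K q n ≠ 0)
    {x : Module.End K (qV K)} (hx : ∃ D, Rep q x D) (h0 : x ≠ 0) : theD q x ≠ 0 := by
  intro h
  exact h0 (eq_zero_of_rep_zero q (h ▸ theD_spec q hx))

/-- The leading exponent of an operator. -/
noncomputable def nuF (x : Module.End K (qV K)) : ℤ ×ₗ ℕ :=
  toLex (sTop (theD q x), dTop (theD q x))

lemma sTop_congr {D E : ℤ →₀ Polynomial K} (h : D.support = E.support) :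
    sTop D = sTop E := by
  unfold sTop
  by_cases hD : D = 0
  · have hE : E = 0 := by
      rw [← Finsupp.support_eq_empty, ← h, Finsupp.support_eq_empty]
      exact hD
    rw [dif_pos hD, dif_pos hE]
  · have hE : E ≠ 0 := by
      intro hE0
      apply hD
      rw [← Finsupp.support_eq_empty, h, Finsupp.support_eq_empty]
      exact hE0
    rw [dif_neg hD, dif_neg hE]
    simp only [h]

lemma nu_smul (hq : q ≠ 0) (hfree : ∀ n : ℤ, n ≠ 0 → qInt K q n ≠ 0)
    {x : Module.End K (qV K)} (hx : ∃ D, Rep q x D) {c : K} (hc : c ≠ 0) :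
    nuF q (c • x) = nuF q x := by
  obtain ⟨D, hD⟩ := hx
  have h1 : theD q x = D := theD_eq q hq hfree hD
  have h2 : theD q (c • x) = c • D := theD_eq q hq hfree (rep_smul q c hD)
  rw [nuF, nuF, h1, h2]
  by_cases hD0 : D = 0
  · rw [hD0, smul_zero]
  have hsupp : (c • D).support = D.support := Finsupp.support_smul_eq hc
  have hsTop : sTop (c • D) = sTop D := sTop_congr hsupp
  have hdTop : dTop (c • D) = dTop D := by
    rw [dTop, dTop, hsTop, Finsupp.smul_apply, Polynomial.smul_eq_C_mul,
      Polynomial.natDegree_C_mul hc]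
  rw [hsTop, hdTop]

lemma nuD_add {D E : ℤ →₀ Polynomial K} (hD : D ≠ 0) (hE : E ≠ 0) (hDE : D + E ≠ 0) :
    toLex (sTop (D + E), dTop (D + E)) ≤
      max (toLex (sTop D, dTop D)) (toLex (sTop E, dTop E)) := by
  classical
  set s3 := sTop (D + E) with hs3def
  have hs3 : s3 ∈ (D + E).support := sTop_mem hDE
  have hmem' : s3 ∈ D.support ∪ E.support := Finsupp.support_add hs3
  rcases lt_trichotomy (sTop D) (sTop E) with hc | hc | hc
  · -- sTop D < sTop E
    have hs3E : s3 ≤ sTop E := by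
      rcases Finset.mem_union.mp hmem' with h | h
      · exact le_trans (le_sTop h) (le_of_lt hc)
      · exact le_sTop h
    rcases lt_or_eq_of_le hs3E with h | h
    · exact le_sup_of_le_right (le_of_lt (Prod.Lex.lt_iff.mpr (Or.inl h)))
    · have hD0' : D s3 = 0 := by
        by_contra hcon
        have := le_sTop (Finsupp.mem_support_iff.mpr hcon)
        omega
      have hval : (D + E) s3 = E s3 := by rw [Finsupp.add_apply, hD0', zero_add]
      apply le_sup_of_le_right
      rw [Prod.Lex.le_iff]
      right
      refine ⟨h, ?_⟩
      rw [dTop, dTop, ← hs3def, ← h, hval]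
  · -- equal tops
    have hs3E : s3 ≤ sTop E := by
      rcases Finset.mem_union.mp hmem' with h | h
      · exact le_of_le_of_eq (le_sTop h) hc
      · exact le_sTop h
    rcases lt_or_eq_of_le hs3E with h | h
    · exact le_sup_of_le_right (le_of_lt (Prod.Lex.lt_iff.mpr (Or.inl h)))
    · have hd3 : dTop (D + E) ≤ max (dTop D) (dTop E) := by
        rw [dTop, ← hs3def, Finsupp.add_apply]
        refine le_trans (Polynomial.natDegree_add_le _ _) ?_
        apply max_le_max
        · rw [dTop]
          have : sTop D = s3 := by omega
          rw [this]
        · rw [dTop]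
          have : sTop E = s3 := by omega
          rw [this]
      rcases le_total (dTop D) (dTop E) with hdd | hdd
      · apply le_sup_of_le_right
        rw [Prod.Lex.le_iff]
        right
        exact ⟨h, by simp only [ofLex_toLex]; omega⟩
      · apply le_sup_of_le_left
        rw [Prod.Lex.le_iff]
        right
        exact ⟨by simp only [ofLex_toLex]; omega, by simp only [ofLex_toLex]; omega⟩
  · -- sTop E < sTop D
    have hs3D : s3 ≤ sTop D := by
      rcases Finset.mem_union.mp hmem' with h | h
      · exact le_sTop h
      · exact le_trans (le_sTop h) (le_of_lt hc)
    rcases lt_or_eq_of_le hs3D with h | h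
    · exact le_sup_of_le_left (le_of_lt (Prod.Lex.lt_iff.mpr (Or.inl h)))
    · have hE0' : E s3 = 0 := by
        by_contra hcon
        have := le_sTop (Finsupp.mem_support_iff.mpr hcon)
        omega
      have hval : (D + E) s3 = D s3 := by rw [Finsupp.add_apply, hE0', add_zero]
      apply le_sup_of_le_left
      rw [Prod.Lex.le_iff]
      right
      refine ⟨h, ?_⟩
      rw [dTop, dTop, ← hs3def, ← h, hval]

lemma nu_add (hq : q ≠ 0) (hfree : ∀ n : ℤ, n ≠ 0 → qInt K q n ≠ 0)
    {x y : Module.End K (qV K)} (hx : ∃ D, Rep q x D) (hy : ∃ D, Rep q y D)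
    (hx0 : x ≠ 0) (hy0 : y ≠ 0) (hxy0 : x + y ≠ 0) :
    nuF q (x + y) ≤ max (nuF q x) (nuF q y) := by
  obtain ⟨D, hD⟩ := hx
  obtain ⟨E, hE⟩ := hy
  have h1 : theD q x = D := theD_eq q hq hfree hD
  have h2 : theD q y = E := theD_eq q hq hfree hE
  have h3 : theD q (x + y) = D + E := theD_eq q hq hfree (rep_add q hD hE)
  have hD0 : D ≠ 0 := by
    rw [← h1]
    exact theD_ne_zero q hq hfree ⟨D, hD⟩ hx0
  have hE0 : E ≠ 0 := by
    rw [← h2]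
    exact theD_ne_zero q hq hfree ⟨E, hE⟩ hy0
  have hDE0 : D + E ≠ 0 := by
    rw [← h3]
    exact theD_ne_zero q hq hfree ⟨D + E, rep_add q hD hE⟩ hxy0
  rw [nuF, nuF, nuF, h1, h2, h3]
  exact nuD_add hD0 hE0 hDE0

lemma nu_elim (hq : q ≠ 0) (hfree : ∀ n : ℤ, n ≠ 0 → qInt K q n ≠ 0)
    {x y : Module.End K (qV K)} (hx : ∃ D, Rep q x D) (hy : ∃ D, Rep q y D)
    (hx0 : x ≠ 0) (hy0 : y ≠ 0) (hnu : nuF q x = nuF q y) :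
    ∃ c : K, x - c • y = 0 ∨ ((x - c • y) ≠ 0 ∧ nuF q (x - c • y) < nuF q x) := by
  classical
  obtain ⟨D, hD⟩ := hx
  obtain ⟨E, hE⟩ := hy
  have h1 : theD q x = D := theD_eq q hq hfree hD
  have h2 : theD q y = E := theD_eq q hq hfree hE
  have hD0 : D ≠ 0 := by
    rw [← h1]; exact theD_ne_zero q hq hfree ⟨D, hD⟩ hx0
  have hE0 : E ≠ 0 := by
    rw [← h2]; exact theD_ne_zero q hq hfree ⟨E, hE⟩ hy0
  rw [nuF, nuF, h1, h2] at hnu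
  have hnu' : sTop D = sTop E ∧ dTop D = dTop E := by
    have := congrArg (fun p => ofLex p) hnu
    simp only [ofLex_toLex] at this
    exact ⟨congrArg Prod.fst this, congrArg Prod.snd this⟩
  obtain ⟨hss, hdd⟩ := hnu'
  set P := D (sTop D) with hP
  set Q := E (sTop E) with hQ
  have hPne : P ≠ 0 := top_ne_zero hD0
  have hQne : Q ≠ 0 := top_ne_zero hE0
  set c := P.leadingCoeff / Q.leadingCoeff with hc
  have hc0 : c ≠ 0 := div_ne_zero (Polynomial.leadingCoeff_ne_zero.mpr hPne)
    (Polynomial.leadingCoeff_ne_zero.mpr hQne)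
  refine ⟨c, ?_⟩
  by_cases hz : x - c • y = 0
  · exact Or.inl hz
  right
  refine ⟨hz, ?_⟩
  have hrepz : Rep q (x - c • y) (D - c • E) := rep_sub q hD (rep_smul q c hE)
  have h3 : theD q (x - c • y) = D - c • E := theD_eq q hq hfree hrepz
  have hz0 : D - c • E ≠ 0 := by
    rw [← h3]
    exact theD_ne_zero q hq hfree ⟨_, hrepz⟩ hz
  rw [nuF, nuF, h1, h3]
  set s3 := sTop (D - c • E) with hs3def
  have hs3 : s3 ∈ (D - c • E).support := sTop_mem hz0
  have hsub : s3 ∈ D.support ∪ (c • E).support := Finsupp.support_sub hs3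
  have hs3le : s3 ≤ sTop D := by
    rcases Finset.mem_union.mp hsub with h | h
    · exact le_sTop h
    · have h4 := Finsupp.support_smul h
      have := le_sTop h4
      omega
  rcases lt_or_eq_of_le hs3le with h | h
  · exact Prod.Lex.lt_iff.mpr (Or.inl h)
  · -- top bands coincide; compare polynomial degrees
    rw [Prod.Lex.lt_iff]
    right
    refine ⟨h, ?_⟩
    have hval : (D - c • E) s3 = P - c • Q := by
      rw [Finsupp.sub_apply, Finsupp.smul_apply, h, hP, hss, hQ]
    have hlcQ : (c • Q).leadingCoeff = c * Q.leadingCoeff := by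
      rw [Polynomial.smul_eq_C_mul, Polynomial.leadingCoeff_mul, Polynomial.leadingCoeff_C]
    have hlceq : P.leadingCoeff = (c • Q).leadingCoeff := by
      rw [hlcQ, hc, div_mul_cancel₀]
      exact Polynomial.leadingCoeff_ne_zero.mpr hQne
    have hdeg : P.degree = (c • Q).degree := by
      have hcQne : c • Q ≠ 0 := smul_ne_zero hc0 hQne
      rw [Polynomial.degree_eq_natDegree hPne, Polynomial.degree_eq_natDegree hcQne]
      congr 1
      rw [Polynomial.smul_eq_C_mul, Polynomial.natDegree_C_mul hc0]
      have hPd : P.natDegree = dTop D := by rw [dTop, hP]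
      have hQd : Q.natDegree = dTop E := by rw [dTop, hQ]
      omega
    have hdlt := Polynomial.degree_sub_lt hdeg hPne hlceq
    have hzne : (D - c • E) s3 ≠ 0 := top_ne_zero hz0
    rw [hval] at hzne
    have hPd : dTop D = P.natDegree := by rw [dTop, hP]
    rw [dTop, ← hs3def, hval, hPd]
    exact Polynomial.natDegree_lt_natDegree hzne hdlt

end Nu

section SpanComm

lemma span_comm {A : Type*} [Ring A] [Algebra K A] (S : Set A)
    (hS : ∀ x ∈ S, ∀ y ∈ S, x * y = y * x) :
    ∀ w ∈ Submodule.span K S, ∀ w' ∈ Submodule.span K S, w * w' = w' * w := by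
  intro w hw
  induction hw using Submodule.span_induction with
  | mem x hx =>
    intro w' hw'
    induction hw' using Submodule.span_induction with
    | mem y hy => exact hS x hx y hy
    | zero => simp
    | add a b _ _ iha ihb => rw [mul_add, add_mul, iha, ihb]
    | smul c a _ iha => rw [mul_smul_comm, smul_mul_assoc, iha]
  | zero => intro w' _; simp
  | add a b _ _ iha ihb => intro w' hw'; rw [add_mul, mul_add, iha w' hw', ihb w' hw']
  | smul c a _ iha => intro w' hw'; rw [smul_mul_assoc, mul_smul_comm, iha w' hw']

end SpanComm

end HSproof

/-- **Hellström–Silvestrov (free type case).** Let `K` be a field and let `q ∈ K` be of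
free type, i.e. `q ≠ 0` and `{n}_q ≠ 0` for every nonzero integer `n`. If `P` and `Q` are
commuting elements of the `q`-deformed Heisenberg algebra `H_q`, then there is a nonzero
bivariate polynomial `F(x,y)` over `K` with `F(P,Q) = 0` in `H_q`. -/
theorem algebraic_dependence_qHeis_free_type
    {K : Type*} [Field K] (q : K) (hq : q ≠ 0)
    (hfree : ∀ n : ℤ, n ≠ 0 → qInt K q n ≠ 0)
    (P Q : qHeis K q) (hPQ : P * Q = Q * P) :
    ∃ F : MvPolynomial (Fin 2) K, F ≠ 0 ∧
      (F.support.sum fun d => F.coeff d • (P ^ d 0 * Q ^ d 1)) = 0 := by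
  classical
  set g : (Fin 2 →₀ ℕ) → qHeis K q := fun d => P ^ d 0 * Q ^ d 1 with hg
  suffices hNLI : ¬ LinearIndependent K g by
    rw [linearIndependent_iff] at hNLI
    push_neg at hNLI
    obtain ⟨l, hsum, hl0⟩ := hNLI
    refine ⟨AddMonoidAlgebra.ofCoeff l, fun h => hl0 (congrArg AddMonoidAlgebra.coeff h), ?_⟩
    rw [Finsupp.linearCombination_apply] at hsum
    exact hsum
  intro hLI
  obtain ⟨aP, haP⟩ := HSproof.Bdd_rho q hq P
  obtain ⟨aQ, haQ⟩ := HSproof.Bdd_rho q hq Q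
  set a := max (max aP aQ) 1 with ha
  have ha1 : 1 ≤ a := le_max_right _ _
  have hP' : HSproof.Bdd q a (HSproof.rho q hq P) :=
    HSproof.Bdd_mono q (le_trans (le_max_left aP aQ) (le_max_left _ 1)) haP
  have hQ' : HSproof.Bdd q a (HSproof.rho q hq Q) :=
    HSproof.Bdd_mono q (le_trans (le_max_right aP aQ) (le_max_left _ 1)) haQ
  set M := 5 * a with hM
  set B := 2 * M * a with hB
  set e : Fin (M + 1) × Fin (M + 1) → (Fin 2 →₀ ℕ) :=
    fun p => Finsupp.single 0 (p.1 : ℕ) + Finsupp.single 1 (p.2 : ℕ) with he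
  have he0 : ∀ p, (e p) 0 = (p.1 : ℕ) := by
    intro p
    simp [he, Finsupp.single_apply]
  have he1 : ∀ p, (e p) 1 = (p.2 : ℕ) := by
    intro p
    simp [he, Finsupp.single_apply]
  have heinj : Function.Injective e := by
    intro p p' h
    have h0 : (p.1 : ℕ) = (p'.1 : ℕ) := by rw [← he0 p, ← he0 p', h]
    have h1 : (p.2 : ℕ) = (p'.2 : ℕ) := by rw [← he1 p, ← he1 p', h]
    exact Prod.ext (Fin.val_injective h0) (Fin.val_injective h1)
  have hLI' : LinearIndependent K (g ∘ e) := hLI.comp e heinj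
  set 𝔚 : Submodule K (qHeis K q) := Submodule.span K (Set.range (g ∘ e)) with hW
  haveI : FiniteDimensional K 𝔚 := FiniteDimensional.span_of_finite K (Set.finite_range _)
  have hrank : Module.finrank K 𝔚 = (M + 1) * (M + 1) := by
    rw [hW, finrank_span_eq_card hLI']
    simp
  set ρ := HSproof.rho q hq with hρ
  have hinj : Function.Injective ρ := HSproof.rho_injective q hq hfree
  have hne0 : ∀ x : qHeis K q, x ≠ 0 → ρ x ≠ 0 := by
    intro x hx0 h
    exact hx0 (hinj (by rw [h, map_zero]))
  -- commutativity
  have hWcomm : ∀ w ∈ 𝔚, ∀ w' ∈ 𝔚, w * w' = w' * w := by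
    apply HSproof.span_comm
    rintro x ⟨p, rfl⟩ y ⟨p', rfl⟩
    have hc : Commute P Q := hPQ
    have h1 : Commute (P ^ (e p) 0 * Q ^ (e p) 1) (P ^ (e p') 0 * Q ^ (e p') 1) :=
      Commute.mul_left
        (Commute.mul_right ((Commute.refl P).pow_pow _ _) (hc.pow_pow _ _))
        (Commute.mul_right (hc.symm.pow_pow _ _) ((Commute.refl Q).pow_pow _ _))
    exact h1
  -- boundedness
  have hWBdd : ∀ w ∈ 𝔚, HSproof.Bdd q B (ρ w) := by
    intro w hw
    induction hw using Submodule.span_induction with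
    | mem w hw =>
        obtain ⟨p, rfl⟩ := hw
        have hge : g (e p) = P ^ (p.1 : ℕ) * Q ^ (p.2 : ℕ) := by
          rw [hg]
          simp only [he0, he1]
        simp only [Function.comp_apply]
        rw [hge, map_mul, map_pow, map_pow]
        have h1 := HSproof.Bdd_pow q hq hP' (p.1 : ℕ)
        have h2 := HSproof.Bdd_pow q hq hQ' (p.2 : ℕ)
        have h3 := HSproof.Bdd_mul q hq h1 h2
        apply HSproof.Bdd_mono q _ h3
        have hp1 : (p.1 : ℕ) ≤ M := Nat.lt_succ_iff.mp p.1.isLt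
        have hp2 : (p.2 : ℕ) ≤ M := Nat.lt_succ_iff.mp p.2.isLt
        calc (p.1 : ℕ) * a + (p.2 : ℕ) * a ≤ M * a + M * a :=
              add_le_add (mul_le_mul_left hp1 a) (mul_le_mul_left hp2 a)
        _ = 2 * M * a := by ring
    | zero => rw [map_zero]; exact HSproof.Bdd_zero q B
    | add u v _ _ ihu ihv => rw [map_add]; exact HSproof.Bdd_add q ihu ihv
    | smul c u _ ihu => rw [map_smul]; exact HSproof.Bdd_smul q c ihu
  have hWRep : ∀ w ∈ 𝔚, ∃ D, HSproof.Rep q (ρ w) D := by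
    intro w hw
    obtain ⟨D, h, _⟩ := hWBdd w hw
    exact ⟨D, h⟩
  -- leading exponent on 𝔚, pulled back along ρ
  set ν : qHeis K q → ℤ ×ₗ ℕ := fun w => HSproof.nuF q (ρ w) with hν
  -- colinearity direction
  obtain ⟨s₀, d₀, hs₀d₀, hcolin⟩ :
      ∃ (s₀ : ℤ) (d₀ : ℕ), ¬(s₀ = 0 ∧ d₀ = 0) ∧
        ∀ x ∈ 𝔚, x ≠ 0 →
          HSproof.sTop (HSproof.theD q (ρ x)) * (d₀ : ℤ) =
            s₀ * (HSproof.dTop (HSproof.theD q (ρ x)) : ℤ) := by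
    by_cases hex : ∃ x, x ∈ 𝔚 ∧ x ≠ 0 ∧ ν x ≠ toLex ((0 : ℤ), (0 : ℕ))
    · obtain ⟨x₀, hx₀W, hx₀0, hx₀nu⟩ := hex
      refine ⟨HSproof.sTop (HSproof.theD q (ρ x₀)), HSproof.dTop (HSproof.theD q (ρ x₀)),
        ?_, ?_⟩
      · rintro ⟨ha', hb'⟩
        apply hx₀nu
        rw [hν]
        simp only
        rw [HSproof.nuF, ha', hb']
      · intro x hxW hx0
        have hcomm : ρ x * ρ x₀ = ρ x₀ * ρ x := by
          rw [← map_mul, ← map_mul, hWcomm x hxW x₀ hx₀W]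
        have hDx := HSproof.theD_spec q (hWRep x hxW)
        have hDx₀ := HSproof.theD_spec q (hWRep x₀ hx₀W)
        have hDx0 : HSproof.theD q (ρ x) ≠ 0 :=
          HSproof.theD_ne_zero q hq hfree (hWRep x hxW) (hne0 x hx0)
        have hDx₀0 : HSproof.theD q (ρ x₀) ≠ 0 :=
          HSproof.theD_ne_zero q hq hfree (hWRep x₀ hx₀W) (hne0 x₀ hx₀0)
        exact HSproof.det_zero q hq hfree hcomm hDx hDx₀ hDx0 hDx₀0
    · push_neg at hex
      refine ⟨1, 0, by simp, ?_⟩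
      intro x hxW hx0
      have h := hex x hxW hx0
      rw [hν] at h
      simp only at h
      rw [HSproof.nuF] at h
      have h2 : (HSproof.sTop (HSproof.theD q (ρ x)), HSproof.dTop (HSproof.theD q (ρ x))) =
          ((0 : ℤ), (0 : ℕ)) := by
        have := congrArg (fun p => ofLex p) h
        simpa using this
      rw [Prod.mk.injEq] at h2
      rw [h2.1, h2.2]
      simp
  -- the finite exponent set
  set Γ : Finset (ℤ ×ₗ ℕ) :=
    (((Finset.Icc (-(B : ℤ)) (B : ℤ)) ×ˢ (Finset.range (B + 1))).filter
      (fun p => p.1 * (d₀ : ℤ) = s₀ * (p.2 : ℤ))).image (fun p => toLex p) with hΓ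
  have hΓcard : Γ.card ≤ 2 * B + 2 := by
    rw [hΓ]
    refine le_trans (Finset.card_image_le) ?_
    by_cases hs0 : s₀ = 0
    · have hd0 : d₀ ≠ 0 := fun h => hs₀d₀ ⟨hs0, h⟩
      refine le_trans (Finset.card_le_card_of_injOn (fun p => p.2)
        (t := Finset.range (B + 1)) ?_ ?_) ?_
      · intro p hp
        rw [Finset.mem_coe, Finset.mem_filter, Finset.mem_product] at hp
        exact hp.1.2
      · intro p hp p' hp' hpp'
        have hpp2 : p.2 = p'.2 := hpp'
        simp only [Finset.coe_filter, Set.mem_setOf_eq, Finset.mem_product] at hp hp'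
        have h1 : p.1 * (d₀ : ℤ) = 0 := by rw [hp.2, hs0, zero_mul]
        have h2 : p'.1 * (d₀ : ℤ) = 0 := by rw [hp'.2, hs0, zero_mul]
        have hd0' : (d₀ : ℤ) ≠ 0 := by exact_mod_cast hd0
        have hp1 : p.1 = 0 := by
          rcases mul_eq_zero.mp h1 with h | h
          · exact h
          · exact absurd h hd0'
        have hp1' : p'.1 = 0 := by
          rcases mul_eq_zero.mp h2 with h | h
          · exact h
          · exact absurd h hd0'
        exact Prod.ext (by rw [hp1, hp1']) hpp2
      · rw [Finset.card_range]
        omega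
    · refine le_trans (Finset.card_le_card_of_injOn (fun p => p.1)
        (t := Finset.Icc (-(B : ℤ)) (B : ℤ)) ?_ ?_) ?_
      · intro p hp
        rw [Finset.mem_coe, Finset.mem_filter, Finset.mem_product] at hp
        exact hp.1.1
      · intro p hp p' hp' hpp'
        have hpp1 : p.1 = p'.1 := hpp'
        simp only [Finset.coe_filter, Set.mem_setOf_eq, Finset.mem_product] at hp hp'
        have h1 : s₀ * (p.2 : ℤ) = s₀ * (p'.2 : ℤ) := by
          rw [← hp.2, ← hp'.2, hpp1]
        have h2 := mul_left_cancel₀ hs0 h1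
        have h3 : p.2 = p'.2 := by exact_mod_cast h2
        exact Prod.ext hpp1 h3
      · rw [Int.card_Icc]
        omega
  -- apply the dimension bound
  have hdim := HSproof.dim_le_card ν Γ.card Γ (le_refl _) 𝔚 inferInstance
    (by
      intro x hx hx0
      obtain ⟨D, hD, hDsupp, hDdeg⟩ := hWBdd x hx
      have h1 : HSproof.theD q (ρ x) = D := HSproof.theD_eq q hq hfree hD
      have hD0 : D ≠ 0 := by
        rw [← h1]
        exact HSproof.theD_ne_zero q hq hfree (hWRep x hx) (hne0 x hx0)
      have hmem1 : (HSproof.sTop D).natAbs ≤ B := hDsupp _ (HSproof.sTop_mem hD0)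
      have hmem2 : HSproof.dTop D ≤ B := hDdeg _
      have hcol := hcolin x hx hx0
      rw [h1] at hcol
      rw [hν]
      simp only
      rw [HSproof.nuF, h1, hΓ]
      apply Finset.mem_image_of_mem
      rw [Finset.mem_filter, Finset.mem_product]
      refine ⟨⟨?_, ?_⟩, hcol⟩
      · rw [Finset.mem_Icc]
        omega
      · rw [Finset.mem_range]
        omega)
    (by
      intro x hx y hy hx0 hy0 hxy0
      rw [hν]
      simp only
      rw [map_add]
      exact HSproof.nu_add q hq hfree (hWRep x hx) (hWRep y hy)
        (hne0 x hx0) (hne0 y hy0) (by rw [← map_add]; exact hne0 _ hxy0))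
    (by
      intro x hx c hc
      rw [hν]
      simp only
      rw [map_smul]
      exact HSproof.nu_smul q hq hfree (hWRep x hx) hc)
    (by
      intro x hx y hy hx0 hy0 hnu
      rw [hν] at hnu
      simp only at hnu
      obtain ⟨c, hc⟩ := HSproof.nu_elim q hq hfree (hWRep x hx) (hWRep y hy)
        (hne0 x hx0) (hne0 y hy0) hnu
      refine ⟨c, ?_⟩
      have hmap : ρ x - c • ρ y = ρ (x - c • y) := by
        rw [map_sub, map_smul]
      rcases hc with h | ⟨h1, h2⟩
      · left
        rw [hmap] at h
        have := hinj (by rw [h, map_zero] : ρ (x - c • y) = ρ 0)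
        exact this
      · right
        constructor
        · intro h0
          rw [hmap] at h1
          exact h1 (by rw [h0, map_zero])
        · rw [hν]
          simp only
          rw [map_sub, map_smul]
          exact h2)
  rw [hrank] at hdim
  have hfin : (M + 1) * (M + 1) ≤ 2 * B + 2 := le_trans hdim hΓcard
  rw [hB, hM] at hfin
  nlinarith [ha1, hfin]
end
end

section
/- Let K be a field and let q ∈ K, q ≠ 1, be a root of unity of multiplicative order p (i.e., p is the smallest positive integer with q^p = 1). Then in the q-deformed Heisenberg algebra H_q over K, the elements α = A^p and β = B^p commute, but they satisfy no nontrivial commutative polynomial relation over K: for every nonzero bivariate polynomial F(x,y) with coefficients in K, F(A^p, B^p) ≠ 0 in H_q. -/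
noncomputable section

section AuxHeis
variable {K : Type*} [Field K]

/-- geometric sum `1 + q + ... + q^(n-1)`. -/
def gsum (q : K) (n : ℕ) : K := ∑ k ∈ Finset.range n, q ^ k

lemma gsum_succ' (q : K) (n : ℕ) : gsum q (n+1) = q ^ n + gsum q n := geom_sum_succ'

lemma gsum_succ (q : K) (n : ℕ) : gsum q (n+1) = q * gsum q n + 1 := geom_sum_succ

lemma gsum_eq_zero {q : K} (hq1 : q ≠ 1) {m : ℕ} (h : q ^ m = 1) : gsum q m = 0 := by
  rw [gsum, geom_sum_eq hq1, h, sub_self, zero_div]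

/-- The module `⊕ K·x^i z^j` on which `H_q` acts. -/
abbrev V (K : Type*) [Field K] : Type _ := (ℕ × ℕ) →₀ K

/-- Action of `B`. -/
def Ba : V K →ₗ[K] V K :=
  Finsupp.lsum K fun ij => LinearMap.toSpanSingleton K (V K) (Finsupp.single (ij.1 + 1, ij.2) 1)

/-- Action of `A`. -/
def Aa (q : K) : V K →ₗ[K] V K :=
  Finsupp.lsum K fun ij => LinearMap.toSpanSingleton K (V K)
    (q ^ ij.1 • Finsupp.single (ij.1, ij.2 + 1) 1 + gsum q ij.1 • Finsupp.single (ij.1 - 1, ij.2) 1)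

lemma Ba_single (i j : ℕ) (c : K) : Ba (Finsupp.single (i,j) c) = Finsupp.single (i+1,j) c := by
  simp [Ba, LinearMap.toSpanSingleton_apply, Finsupp.smul_single]

lemma Aa_single (q : K) (i j : ℕ) (c : K) :
    Aa q (Finsupp.single (i,j) c) =
      (c * q ^ i) • Finsupp.single (i, j+1) 1 + (c * gsum q i) • Finsupp.single (i-1, j) 1 := by
  simp [Aa, LinearMap.toSpanSingleton_apply, smul_add, smul_smul]

lemma single_eq_smul (i j : ℕ) (c : K) :
    (Finsupp.single (i,j) c : V K) = c • Finsupp.single (i,j) 1 := by simp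

lemma heis_rel (q : K) : (Aa q) * Ba = q • (Ba * Aa q) + 1 := by
  apply Finsupp.lhom_ext
  rintro ⟨i, j⟩ c
  simp only [Module.End.mul_apply, LinearMap.add_apply, LinearMap.smul_apply, Module.End.one_apply,
    Ba_single, Aa_single, map_add, map_smul]
  cases i with
  | zero =>
    rw [single_eq_smul 0 j c]
    simp only [gsum_succ q 0, Nat.zero_sub, Nat.sub_zero]
    have h0 : gsum q 0 = 0 := by simp [gsum]
    rw [h0]
    module
  | succ m =>
    rw [gsum_succ q (m+1), single_eq_smul (m+1) j c]
    simp only [Nat.add_sub_cancel, Nat.succ_sub_one]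
    module

/-- The representation of `H_q` on `V`. -/
def rep (q : K) : qHeis K q →ₐ[K] Module.End K (V K) :=
  RingQuot.liftAlgHom K ⟨FreeAlgebra.lift K ![Aa q, Ba], by
    rintro x y ⟨⟩
    simp only [map_mul, map_add, map_smul, map_one, FreeAlgebra.lift_ι_apply,
      Matrix.cons_val_zero, Matrix.cons_val_one, Matrix.head_cons]
    exact heis_rel q⟩

lemma rep_A (q : K) : rep q (qA K q) = Aa q := by
  rw [qA, rep, RingQuot.liftAlgHom_mkAlgHom_apply]
  simp [FreeAlgebra.lift_ι_apply]

lemma rep_B (q : K) : rep q (qB K q) = Ba := by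
  rw [qB, rep, RingQuot.liftAlgHom_mkAlgHom_apply]
  simp [FreeAlgebra.lift_ι_apply]

lemma Ba_pow (n i j : ℕ) :
    (Ba ^ n : V K →ₗ[K] V K) (Finsupp.single (i,j) 1) = Finsupp.single (i+n, j) 1 := by
  induction n with
  | zero => simp
  | succ m ih =>
    rw [pow_succ', Module.End.mul_apply, ih, Ba_single]
    have h : i + m + 1 = i + (m + 1) := by omega
    rw [h]

lemma Aa_pow (q : K) (i : ℕ) (hx : q ^ i = 1) (hg : gsum q i = 0) (n j : ℕ) :
    (Aa q ^ n) (Finsupp.single (i,j) 1 : V K) = Finsupp.single (i, j+n) 1 := by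
  induction n with
  | zero => simp
  | succ m ih =>
    rw [pow_succ', Module.End.mul_apply, ih, Aa_single, hx, hg]
    simp only [one_mul, mul_zero, zero_smul, add_zero, one_smul]
    have h : j + m + 1 = j + (m + 1) := by omega
    rw [h]

lemma qHeis_rel (q : K) : qA K q * qB K q = q • (qB K q * qA K q) + 1 := by
  have := RingQuot.mkAlgHom_rel K (qHeisRel.rel (K := K) (q := q))
  simpa only [map_mul, map_add, map_smul, map_one, qA, qB] using this

lemma qHeis_key (q : K) (n : ℕ) :
    qA K q ^ (n+1) * qB K q
      = q ^ (n+1) • (qB K q * qA K q ^ (n+1)) + gsum q (n+1) • qA K q ^ n := by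
  induction n with
  | zero =>
    have hg1 : gsum q 1 = 1 := by simp [gsum]
    rw [pow_one, pow_one, pow_zero, hg1, qHeis_rel q]
    module
  | succ m ih =>
    have h1 : qA K q ^ (m+2) * qB K q = qA K q * (qA K q ^ (m+1) * qB K q) := by
      rw [← mul_assoc, ← pow_succ']
    rw [h1, ih, mul_add, mul_smul_comm, mul_smul_comm, ← mul_assoc, qHeis_rel q,
      add_mul, smul_mul_assoc, one_mul, mul_assoc, ← pow_succ', ← pow_succ',
      gsum_succ' q (m+1)]
    rw [smul_add, smul_smul, ← pow_succ]
    module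

end AuxHeis

/-- If `q ≠ 1` is a root of unity of multiplicative order `p`, then in the `q`-deformed
Heisenberg algebra the elements `α = A^p` and `β = B^p` commute, but satisfy no nontrivial
polynomial relation over `K`: for every nonzero bivariate polynomial `F(x,y)` over `K` one
has `F(A^p, B^p) ≠ 0` in `H_q`. -/

theorem qHeis_torsion_no_algebraic_relation_over_field
    {K : Type*} [Field K] (q : K) (hq0 : q ≠ 0) (hq1 : q ≠ 1)
    (p : ℕ) (hp : 0 < p) (hqp : q ^ p = 1)
    (hmin : ∀ k : ℕ, 0 < k → k < p → q ^ k ≠ 1) :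
    qA K q ^ p * qB K q ^ p = qB K q ^ p * qA K q ^ p ∧
    ∀ F : MvPolynomial (Fin 2) K, F ≠ 0 →
      (F.support.sum fun d => F.coeff d • ((qA K q ^ p) ^ d 0 * (qB K q ^ p) ^ d 1)) ≠ 0 := by
  obtain ⟨m, rfl⟩ : ∃ m, p = m + 1 := ⟨p - 1, (Nat.succ_pred_eq_of_pos hp).symm⟩
  set p := m + 1 with hpdef
  have hgp : gsum q p = 0 := gsum_eq_zero hq1 hqp
  have hApB : qA K q ^ p * qB K q = qB K q * qA K q ^ p := by
    rw [qHeis_key q m, hqp, one_smul, hgp, zero_smul, add_zero]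
  have hcomm : Commute (qA K q ^ p) (qB K q ^ p) := (Commute.pow_right hApB p)
  refine ⟨hcomm, ?_⟩
  intro F hF h0
  -- pick a monomial in the support
  obtain ⟨d₀, hd₀⟩ : F.support.Nonempty := by
    rw [Finset.nonempty_iff_ne_empty]
    simpa [MvPolynomial.support_eq_empty] using hF
  -- apply the representation and evaluate at the vector `1`
  have h1 := congrArg (rep q) h0
  rw [map_sum, map_zero] at h1
  have h2 := congrArg (fun f : Module.End K (V K) => f (Finsupp.single (0,0) 1)) h1
  simp only [LinearMap.sum_apply, LinearMap.zero_apply] at h2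
  have hterm : ∀ d ∈ F.support,
      (rep q) (F.coeff d • ((qA K q ^ p) ^ d 0 * (qB K q ^ p) ^ d 1)) (Finsupp.single (0,0) 1)
        = F.coeff d • (Finsupp.single (p * d 1, p * d 0) 1 : V K) := by
    intro d _
    have hx : q ^ (p * d 1) = 1 := by rw [pow_mul, hqp, one_pow]
    have hg : gsum q (p * d 1) = 0 := gsum_eq_zero hq1 hx
    simp only [map_smul, map_mul, map_pow, rep_A, rep_B, ← pow_mul,
      LinearMap.smul_apply, Module.End.mul_apply]
    rw [Ba_pow, Nat.zero_add, Aa_pow q _ hx hg, Nat.zero_add]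
  rw [Finset.sum_congr rfl hterm] at h2
  have h3 := DFunLike.congr_fun h2 (p * d₀ 1, p * d₀ 0)
  rw [Finsupp.finset_sum_apply, Finsupp.coe_zero, Pi.zero_apply] at h3
  rw [Finset.sum_eq_single d₀ ?h₁ ?h₂] at h3
  · rw [Finsupp.smul_apply, Finsupp.single_eq_same, smul_eq_mul, mul_one] at h3
    exact (MvPolynomial.mem_support_iff.mp hd₀) h3
  case h₁ =>
    intro d _ hne
    rw [Finsupp.smul_apply, Finsupp.single_apply, if_neg, smul_zero]
    intro heq
    apply hne
    have e1 : d 1 = d₀ 1 := Nat.eq_of_mul_eq_mul_left hp (congrArg Prod.fst heq)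
    have e2 : d 0 = d₀ 0 := Nat.eq_of_mul_eq_mul_left hp (congrArg Prod.snd heq)
    ext i
    fin_cases i
    · exact e2
    · exact e1
  case h₂ => intro h; exact absurd hd₀ h
end
end

section
/- Let K be a field and let q ∈ K be of free type, i.e., q ≠ 0 and {n}_q ≠ 0 for every nonzero integer n (equivalently: q^n ≠ 1 for every nonzero integer n when q ≠ 1, and char K = 0 when q = 1). Then the center of the q-deformed Heisenberg algebra H_q over K is trivial: Z(H_q) = K·1, the set of scalar multiples of the identity. -/
noncomputable section

namespace QHeisAux

variable {K : Type*} [Field K] (q : K)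

lemma qInt_zero : qInt K q 0 = 0 := by
  unfold qInt; split <;> simp

lemma qInt_one : qInt K q 1 = 1 := by
  unfold qInt; split
  · simp
  · rename_i h; rw [zpow_one]; exact div_self (sub_ne_zero.mpr h)

lemma qInt_add_one (hq : q ≠ 0) (n : ℤ) :
    qInt K q (n + 1) = q * qInt K q n + 1 := by
  unfold qInt; split
  · rename_i h; subst h; push_cast; ring
  · rename_i h
    have h1 : q - 1 ≠ 0 := sub_ne_zero.mpr h
    field_simp
    rw [zpow_add_one₀ hq]
    ring

lemma qInt_cast_succ (hq : q ≠ 0) (n : ℕ) :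
    qInt K q ((n : ℤ) + 1) = q ^ n + qInt K q n := by
  unfold qInt; split
  · rename_i h; subst h; push_cast; simp; ring
  · rename_i h
    have h1 : q - 1 ≠ 0 := sub_ne_zero.mpr h
    field_simp
    rw [zpow_add_one₀ hq, zpow_natCast]
    ring

abbrev W (K : Type*) [Field K] : Type _ := ℤ →₀ K

def Aop : W K →ₗ[K] W K :=
  Finsupp.lsum K fun n => LinearMap.toSpanSingleton K (W K) (qInt K q n • Finsupp.single (n - 1) 1)

def Bop : W K →ₗ[K] W K := Finsupp.lmapDomain K K (· + 1)

lemma Aop_single (n : ℤ) (b : K) :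
    Aop q (Finsupp.single n b) = Finsupp.single (n - 1) (b * qInt K q n) := by
  rw [Aop, Finsupp.lsum_single, LinearMap.toSpanSingleton_apply]
  rw [smul_smul, Finsupp.smul_single, smul_eq_mul, mul_one]

lemma Bop_single (n : ℤ) (b : K) :
    Bop (K := K) (Finsupp.single n b) = Finsupp.single (n + 1) b := by
  rw [Bop, Finsupp.lmapDomain_apply, Finsupp.mapDomain_single]

lemma Bop_injective : Function.Injective (Bop (K := K)) := by
  have : Function.Injective (fun n : ℤ => n + 1) := fun a b h => by simpa using h
  exact fun a b h => Finsupp.mapDomain_injective (M := K) this h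

lemma end_rel (hq : q ≠ 0) :
    (Aop q) * (Bop (K := K)) = q • (Bop (K := K) * Aop q) + 1 := by
  apply Finsupp.lhom_ext
  intro n b
  have key : b * qInt K q (n + 1) = q * (b * qInt K q n) + b := by
    rw [qInt_add_one q hq]; ring
  simp only [Module.End.mul_apply, LinearMap.add_apply, LinearMap.smul_apply,
    Module.End.one_apply, Aop_single, Bop_single]
  rw [add_sub_cancel_right, sub_add_cancel, Finsupp.smul_single, smul_eq_mul,
    ← Finsupp.single_add, key]

def rep (hq : q ≠ 0) : qHeis K q →ₐ[K] Module.End K (W K) :=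
  RingQuot.liftAlgHom K ⟨FreeAlgebra.lift K ![Aop q, Bop], by
    rintro x y ⟨⟩
    simp only [map_mul, map_add, map_smul, map_one, FreeAlgebra.lift_ι_apply,
      Matrix.cons_val_zero, Matrix.cons_val_one, Matrix.head_cons]
    exact end_rel q hq⟩

lemma rep_A (hq : q ≠ 0) : rep q hq (qA K q) = Aop q := by
  rw [rep, qA, RingQuot.liftAlgHom_mkAlgHom_apply, FreeAlgebra.lift_ι_apply]
  simp

lemma rep_B (hq : q ≠ 0) : rep q hq (qB K q) = Bop := by
  rw [rep, qB, RingQuot.liftAlgHom_mkAlgHom_apply, FreeAlgebra.lift_ι_apply]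
  simp

lemma heis_rel : qA K q * qB K q = q • (qB K q * qA K q) + 1 := by
  have h := RingQuot.mkAlgHom_rel K (qHeisRel.rel (K := K) (q := q))
  simpa [qA, qB, map_mul, map_add, map_smul, map_one] using h


lemma pow_rel (hq : q ≠ 0) : ∀ j : ℕ,
    qA K q ^ (j + 1) * qB K q
      = q ^ (j + 1) • (qB K q * qA K q ^ (j + 1)) + qInt K q (j + 1) • qA K q ^ j
  | 0 => by
    simpa [qInt_one] using heis_rel q
  | (j + 1) => by
    have IH := pow_rel hq j
    have h1 : qA K q ^ (j + 2) * qB K q = qA K q * (qA K q ^ (j + 1) * qB K q) := by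
      rw [← mul_assoc, ← pow_succ']
    have h2 : qInt K q ((j:ℤ) + 1 + 1) = q ^ (j + 1) + qInt K q ((j:ℤ) + 1) := by
      have := qInt_cast_succ q hq (j + 1)
      push_cast at this ⊢
      simpa using this
    rw [h1, IH, mul_add, mul_smul_comm, mul_smul_comm, ← mul_assoc, heis_rel q,
      add_mul, smul_mul_assoc, one_mul, smul_add, smul_smul]
    rw [show q ^ (j + 1) * q = q ^ (j + 2) from (pow_succ q (j + 1)).symm]
    rw [show qB K q * qA K q * qA K q ^ (j + 1) = qB K q * qA K q ^ (j + 2) by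
      rw [mul_assoc, ← pow_succ']]
    rw [show qA K q * qA K q ^ j = qA K q ^ (j + 1) from (pow_succ' (qA K q) j).symm]
    have h3 : qInt K q (((j + 1 : ℕ) : ℤ) + 1) • qA K q ^ (j + 1)
        = q ^ (j + 1) • qA K q ^ (j + 1) + qInt K q ((j:ℤ) + 1) • qA K q ^ (j + 1) := by
      push_cast
      rw [h2, add_smul]
    rw [h3]
    abel

/-- the monomials `B^i A^j`. -/
def Mon (p : ℕ × ℕ) : qHeis K q := qB K q ^ p.1 * qA K q ^ p.2

def SpanS : Submodule K (qHeis K q) := Submodule.span K (Set.range (Mon q))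

lemma mon_mem (p : ℕ × ℕ) : Mon q p ∈ SpanS q :=
  Submodule.subset_span (Set.mem_range_self p)

lemma S_mul_A (hq : q ≠ 0) {a : qHeis K q} (ha : a ∈ SpanS q) :
    a * qA K q ∈ SpanS q := by
  induction ha using Submodule.span_induction with
  | mem x hx =>
    obtain ⟨⟨i, j⟩, rfl⟩ := hx
    have : Mon q (i, j) * qA K q = Mon q (i, j + 1) := by
      simp [Mon, pow_succ, mul_assoc]
    rw [this]; exact mon_mem q _
  | zero => simp [Submodule.zero_mem]
  | add x y hx hy ihx ihy => rw [add_mul]; exact Submodule.add_mem _ ihx ihy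
  | smul c x hx ihx => rw [smul_mul_assoc]; exact Submodule.smul_mem _ _ ihx

lemma S_mul_B (hq : q ≠ 0) {a : qHeis K q} (ha : a ∈ SpanS q) :
    a * qB K q ∈ SpanS q := by
  induction ha using Submodule.span_induction with
  | mem x hx =>
    obtain ⟨⟨i, j⟩, rfl⟩ := hx
    match j with
    | 0 =>
      have : Mon q (i, 0) * qB K q = Mon q (i + 1, 0) := by
        simp [Mon, pow_succ]
      rw [this]; exact mon_mem q _
    | (j + 1) =>
      have : Mon q (i, j + 1) * qB K q
          = q ^ (j + 1) • Mon q (i + 1, j + 1) + qInt K q (j + 1) • Mon q (i, j) := by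
        simp only [Mon]
        rw [mul_assoc, pow_rel q hq j, mul_add, mul_smul_comm, mul_smul_comm,
          ← mul_assoc, ← pow_succ]
      rw [this]
      exact Submodule.add_mem _ (Submodule.smul_mem _ _ (mon_mem q _))
        (Submodule.smul_mem _ _ (mon_mem q _))
  | zero => simp [Submodule.zero_mem]
  | add x y hx hy ihx ihy => rw [add_mul]; exact Submodule.add_mem _ ihx ihy
  | smul c x hx ihx => rw [smul_mul_assoc]; exact Submodule.smul_mem _ _ ihx

lemma S_mul_mon (hq : q ≠ 0) {a : qHeis K q} (ha : a ∈ SpanS q) (i j : ℕ) :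
    a * Mon q (i, j) ∈ SpanS q := by
  have hB : ∀ i : ℕ, a * qB K q ^ i ∈ SpanS q := by
    intro i
    induction i with
    | zero => simpa using ha
    | succ i ih =>
      have : a * qB K q ^ (i + 1) = (a * qB K q ^ i) * qB K q := by
        simp [pow_succ, mul_assoc]
      rw [this]; exact S_mul_B q hq ih
  have : ∀ j : ℕ, (a * qB K q ^ i) * qA K q ^ j ∈ SpanS q := by
    intro j
    induction j with
    | zero => simpa using hB i
    | succ j ih =>
      have h : (a * qB K q ^ i) * qA K q ^ (j + 1)
          = ((a * qB K q ^ i) * qA K q ^ j) * qA K q := by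
        simp [pow_succ, mul_assoc]
      rw [h]; exact S_mul_A q hq ih
  simpa [Mon, mul_assoc] using this j

lemma S_mul (hq : q ≠ 0) {a b : qHeis K q} (ha : a ∈ SpanS q) (hb : b ∈ SpanS q) :
    a * b ∈ SpanS q := by
  induction hb using Submodule.span_induction with
  | mem x hx => obtain ⟨⟨i, j⟩, rfl⟩ := hx; exact S_mul_mon q hq ha i j
  | zero => simp [Submodule.zero_mem]
  | add x y hx hy ihx ihy => rw [mul_add]; exact Submodule.add_mem _ ihx ihy
  | smul c x hx ihx => rw [mul_smul_comm]; exact Submodule.smul_mem _ _ ihx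

lemma span_top (hq : q ≠ 0) : ∀ x : qHeis K q, x ∈ SpanS q := by
  intro x
  obtain ⟨w, rfl⟩ := RingQuot.mkAlgHom_surjective K (qHeisRel K q) x
  induction w using FreeAlgebra.induction with
  | grade0 r =>
    rw [AlgHom.commutes]
    have h1 : (1 : qHeis K q) ∈ SpanS q := by
      have : (1 : qHeis K q) = Mon q (0, 0) := by simp [Mon]
      rw [this]; exact mon_mem q _
    rw [Algebra.algebraMap_eq_smul_one]
    exact Submodule.smul_mem _ _ h1
  | grade1 i =>
    match i with
    | 0 =>
      have : RingQuot.mkAlgHom K (qHeisRel K q) (FreeAlgebra.ι K 0) = Mon q (0, 1) := by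
        simp [Mon, qA]
      rw [this]; exact mon_mem q _
    | 1 =>
      have : RingQuot.mkAlgHom K (qHeisRel K q) (FreeAlgebra.ι K 1) = Mon q (1, 0) := by
        simp [Mon, qB]
      rw [this]; exact mon_mem q _
  | mul a b iha ihb => rw [map_mul]; exact S_mul q hq iha ihb
  | add a b iha ihb => rw [map_add]; exact Submodule.add_mem _ iha ihb


lemma Bop_pow_single (i : ℕ) (n : ℤ) (b : K) :
    ((Bop (K := K)) ^ i) (Finsupp.single n b) = Finsupp.single (n + i) b := by
  induction i generalizing n with
  | zero => simp
  | succ i ih =>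
    rw [pow_succ, Module.End.mul_apply, Bop_single, ih]
    congr 1
    push_cast
    ring

lemma Aop_pow_single (j : ℕ) (n : ℤ) :
    ((Aop q) ^ j) (Finsupp.single n (1 : K))
      = Finsupp.single (n - j) (∏ k ∈ Finset.range j, qInt K q (n - k)) := by
  induction j with
  | zero => simp
  | succ j ih =>
    rw [pow_succ', Module.End.mul_apply, ih]
    have : Finsupp.single (n - (j:ℤ)) (∏ k ∈ Finset.range j, qInt K q (n - k))
        = (∏ k ∈ Finset.range j, qInt K q (n - k)) • Finsupp.single (n - (j:ℤ)) (1 : K) := by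
      rw [Finsupp.smul_single, smul_eq_mul, mul_one]
    rw [this, map_smul, Aop_single, Finsupp.smul_single, smul_eq_mul, one_mul,
      Finset.prod_range_succ]
    congr 1
    push_cast
    ring

lemma falling_ne_zero (hfree : ∀ n : ℤ, n ≠ 0 → qInt K q n ≠ 0) (m : ℕ) :
    (∏ k ∈ Finset.range m, qInt K q ((m : ℤ) - k)) ≠ 0 := by
  apply Finset.prod_ne_zero_iff.mpr
  intro k hk
  rw [Finset.mem_range] at hk
  apply hfree
  omega

lemma falling_eq_zero (m j : ℕ) (hmj : m < j) :
    (∏ k ∈ Finset.range j, qInt K q ((m : ℤ) - k)) = 0 := by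
  apply Finset.prod_eq_zero (Finset.mem_range.mpr hmj)
  rw [sub_self]
  exact qInt_zero q

lemma rep_ker (hq : q ≠ 0) (hfree : ∀ n : ℤ, n ≠ 0 → qInt K q n ≠ 0)
    {x : qHeis K q} (hx : rep q hq x = 0) : x = 0 := by
  obtain ⟨c, hc⟩ := (Finsupp.mem_span_range_iff_exists_finsupp).mp (span_top q hq x)
  -- key evaluation
  have key : ∀ (m : ℕ) (i₀ : ℕ),
      ((rep q hq x) (Finsupp.single (m : ℤ) 1)) (i₀ : ℤ)
        = ∑ p ∈ c.support,
            c p * ((∏ k ∈ Finset.range p.2, qInt K q ((m : ℤ) - k)) *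
              (if ((m : ℤ) - p.2 + p.1 = (i₀ : ℤ)) then 1 else 0)) := by
    intro m i₀
    rw [← hc]
    rw [Finsupp.sum, map_sum]
    rw [LinearMap.sum_apply, Finsupp.finset_sum_apply]
    apply Finset.sum_congr rfl
    intro p _
    rw [map_smul, LinearMap.smul_apply, Finsupp.smul_apply, Mon, map_mul, map_pow, map_pow,
      rep_A, rep_B, Module.End.mul_apply, Aop_pow_single, Bop_pow_single]
    rw [Finsupp.single_apply]
    rw [smul_eq_mul]
    congr 1
    split <;> simp
  have hzero : ∀ (m : ℕ), ∀ i : ℕ, c (i, m) = 0 := by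
    intro m
    induction m using Nat.strong_induction_on with
    | _ m IH =>
      intro i₀
      have h0 := key m i₀
      rw [hx] at h0
      simp only [LinearMap.zero_apply, Finsupp.coe_zero, Pi.zero_apply] at h0
      have hsum : ∑ p ∈ c.support,
          c p * ((∏ k ∈ Finset.range p.2, qInt K q ((m : ℤ) - k)) *
            (if ((m : ℤ) - p.2 + p.1 = (i₀ : ℤ)) then 1 else 0))
          = c (i₀, m) * (∏ k ∈ Finset.range m, qInt K q ((m : ℤ) - k)) := by
      -- sum_eq_single
        rw [Finset.sum_eq_single ((i₀, m) : ℕ × ℕ)]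
        · rw [if_pos (by push_cast; ring), mul_one]
        · intro p hp hne
          rcases lt_trichotomy p.2 m with hlt | heq | hgt
          · have : c p = 0 := by
              have := IH p.2 hlt p.1
              simpa using this
            rw [this, zero_mul]
          · have hp1 : p.1 ≠ i₀ := by
              intro h
              apply hne
              ext
              · exact h
              · exact heq
            rw [if_neg (by push_cast; rw [heq]; push_cast; omega)]
            ring
          · rw [falling_eq_zero q m p.2 hgt]
            ring
        · intro hnot
          rw [Finsupp.notMem_support_iff.mp hnot, zero_mul]
      rw [hsum] at h0
      rcases mul_eq_zero.mp h0.symm with h | h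
      · exact h
      · exact absurd h (falling_ne_zero q hfree m)
  have hc0 : c = 0 := by
    ext p
    have := hzero p.2 p.1
    simpa using this
  rw [← hc, hc0]
  simp

lemma Aop_apply (f : W K) :
    Aop q f = f.sum fun k b => Finsupp.single (k - 1) (b * qInt K q k) := by
  rw [Aop, Finsupp.lsum_apply]
  apply Finsupp.sum_congr
  intro k _
  rw [LinearMap.toSpanSingleton_apply, smul_smul, Finsupp.smul_single, smul_eq_mul, mul_one]

lemma Aop_coord (f : W K) (n : ℤ) : (Aop q f) (n - 1) = f n * qInt K q n := by
  rw [Aop_apply, Finsupp.sum_apply, Finsupp.sum]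
  rw [Finset.sum_eq_single n]
  · rw [Finsupp.single_apply, if_pos rfl]
  · intro k _ hk
    rw [Finsupp.single_apply, if_neg (by omega)]
  · intro hn
    rw [Finsupp.notMem_support_iff.mp hn, zero_mul, Finsupp.single_apply]
    simp

end QHeisAux

open QHeisAux

/-- If `q` is of free type (`q ≠ 0` and `{n}_q ≠ 0` for every nonzero integer `n`), then
the center of the `q`-deformed Heisenberg algebra `H_q` over `K` is trivial, i.e. consists
exactly of the scalar multiples of the identity (the bottom `K`-subalgebra). -/
theorem qHeis_center_trivial_of_free_type
    {K : Type*} [Field K] (q : K) (hq : q ≠ 0)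
    (hfree : ∀ n : ℤ, n ≠ 0 → qInt K q n ≠ 0) :
    Subalgebra.center K (qHeis K q) = ⊥ := by
  refine le_antisymm ?_ bot_le
  intro z hz
  rw [Subalgebra.mem_center_iff] at hz
  set T := rep q hq z with hT
  have comA : ∀ v, Aop q (T v) = T (Aop q v) := by
    intro v
    have h : Aop q * T = T * Aop q := by
      rw [hT, ← rep_A q hq, ← map_mul, ← map_mul, hz (qA K q)]
    exact DFunLike.congr_fun h v
  have comB : ∀ v, Bop (K := K) (T v) = T (Bop (K := K) v) := by
    intro v
    have h : Bop (K := K) * T = T * Bop (K := K) := by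
      rw [hT, ← rep_B q hq, ← map_mul, ← map_mul, hz (qB K q)]
    exact DFunLike.congr_fun h v
  set f := T (Finsupp.single (0 : ℤ) 1) with hf
  have h1 : T (Finsupp.single (1 : ℤ) 1) = Bop f := by
    have e : Finsupp.single (1 : ℤ) (1 : K) = Bop (Finsupp.single (0 : ℤ) 1) := by
      rw [Bop_single]; norm_num
    rw [e, ← comB]
  have h2 : Aop q (Finsupp.single (1 : ℤ) 1) = Finsupp.single (0 : ℤ) (1 : K) := by
    rw [Aop_single, qInt_one, mul_one]
    norm_num
  have h3 : f = Aop q (Bop f) := by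
    calc f = T (Aop q (Finsupp.single (1 : ℤ) 1)) := by rw [h2]
    _ = Aop q (T (Finsupp.single (1 : ℤ) 1)) := (comA _).symm
    _ = Aop q (Bop f) := by rw [h1]
  have h4 : Aop q (Bop f) = q • Bop (Aop q f) + f := by
    have h := DFunLike.congr_fun (end_rel q hq) f
    simpa [Module.End.mul_apply] using h
  have h5 : Bop (Aop q f) = 0 := by
    have h := h3.trans h4
    have h' : q • Bop (Aop q f) = 0 := by
      have := right_eq_add.mp h
      exact this
    rcases smul_eq_zero.mp h' with h'' | h''
    · exact absurd h'' hq
    · exact h''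
  have h6 : Aop q f = 0 := by
    apply Bop_injective
    rw [h5, map_zero]
  have h7 : ∀ n : ℤ, n ≠ 0 → f n = 0 := by
    intro n hn
    have h := congrArg (fun g : W K => g (n - 1)) h6
    simp only [Finsupp.coe_zero, Pi.zero_apply] at h
    rw [Aop_coord] at h
    rcases mul_eq_zero.mp h with h' | h'
    · exact h'
    · exact absurd h' (hfree n hn)
  obtain ⟨cv, h8⟩ : ∃ cv : K, f = cv • Finsupp.single (0 : ℤ) 1 := by
    refine ⟨f 0, ?_⟩
    ext a
    by_cases ha : a = 0
    · subst ha
      rw [Finsupp.smul_apply, Finsupp.single_eq_same, smul_eq_mul, mul_one]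
    · rw [h7 a ha, Finsupp.smul_single, smul_eq_mul, mul_one, Finsupp.single_apply,
        if_neg (by omega)]
  have h9 : ∀ n : ℤ, T (Finsupp.single n 1) = cv • Finsupp.single n 1 := by
    intro n
    induction n using Int.induction_on with
    | zero => rw [← hf, h8]
    | succ n ih =>
      have e : Finsupp.single ((n : ℤ) + 1) (1 : K) = Bop (Finsupp.single (n : ℤ) 1) := by
        rw [Bop_single]
      rw [e, ← comB, ih, map_smul, Bop_single]
    | pred n ih =>
      apply Bop_injective
      have e : Bop (Finsupp.single (-(n : ℤ) - 1) (1 : K)) = Finsupp.single (-(n : ℤ)) 1 := by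
        rw [Bop_single]; congr 1; ring
      rw [comB, e, ih, map_smul, e]
  have h10 : rep q hq (z - algebraMap K (qHeis K q) cv) = 0 := by
    rw [map_sub, AlgHom.commutes, ← hT]
    apply sub_eq_zero_of_eq
    apply Finsupp.lhom_ext
    intro n b
    have e : Finsupp.single n b = b • Finsupp.single n (1 : K) := by
      rw [Finsupp.smul_single, smul_eq_mul, mul_one]
    rw [e, map_smul, h9, Module.algebraMap_end_apply, smul_comm]
  have h11 := rep_ker q hq hfree h10
  have h12 : z = algebraMap K (qHeis K q) cv := by
    have := sub_eq_zero.mp h11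
    exact this
  rw [Algebra.mem_bot]
  exact ⟨cv, h12.symm⟩
end
end

section
/- Let K be a field and let q ∈ K, q ≠ 1, be a root of unity of multiplicative order d (i.e., d is the smallest positive integer with q^d = 1). Then the center of the q-deformed Heisenberg algebra H_q over K equals the K-subalgebra generated by A^d and B^d: Z(H_q) = K[A^d, B^d]. -/
noncomputable section

namespace QHAux

variable {K : Type*} [Field K] {q : K}

lemma qInt_natCast (hq1 : q ≠ 1) (n : ℕ) : qInt K q n = (q ^ n - 1) / (q - 1) := by
  simp only [qInt, if_neg hq1, zpow_natCast]

lemma qInt_zero (hq1 : q ≠ 1) : qInt K q 0 = 0 := by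
  simpa using qInt_natCast hq1 0

lemma qInt_succ (hq1 : q ≠ 1) (n : ℕ) :
    qInt K q (n + 1 : ℕ) = q * qInt K q n + 1 := by
  have h : q - 1 ≠ 0 := sub_ne_zero.2 hq1
  rw [qInt_natCast hq1, qInt_natCast hq1]
  field_simp
  ring

lemma qInt_succ' (hq1 : q ≠ 1) (n : ℕ) :
    qInt K q (n + 1 : ℕ) = q ^ n + qInt K q n := by
  have h : q - 1 ≠ 0 := sub_ne_zero.2 hq1
  rw [qInt_natCast hq1, qInt_natCast hq1]
  field_simp
  ring

lemma qInt_eq_zero_iff (hq1 : q ≠ 1) (n : ℕ) :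
    qInt K q n = 0 ↔ q ^ n = 1 := by
  have h : q - 1 ≠ 0 := sub_ne_zero.2 hq1
  rw [qInt_natCast hq1, div_eq_zero_iff, sub_eq_zero]
  constructor
  · rintro (h1 | h1)
    · exact h1
    · exact absurd h1 h
  · exact fun h1 => Or.inl h1

/-- The representation space: a free module with basis indexed by `ℕ × ℕ`. -/
abbrev P (K : Type*) [Field K] : Type _ := (ℕ × ℕ) →₀ K

/-- basis vector -/
def e (p : ℕ × ℕ) : P K := Finsupp.single p 1

variable (K) in
def Bop : P K →ₗ[K] P K :=
  Finsupp.lift _ K _ (fun p => e (p.1 + 1, p.2))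

variable (K q) in
def Aop : P K →ₗ[K] P K :=
  Finsupp.lift _ K _
    (fun p => (q ^ p.1) • e (p.1, p.2 + 1) + (qInt K q p.1) • e (p.1 - 1, p.2))

lemma Bop_e (p : ℕ × ℕ) : Bop K (e p) = e (p.1 + 1, p.2) := by
  rw [Bop, e, Finsupp.lift_apply, Finsupp.sum_single_index (by simp), one_smul]

lemma Aop_e (p : ℕ × ℕ) :
    Aop K q (e p) = (q ^ p.1) • e (p.1, p.2 + 1) + (qInt K q p.1) • e (p.1 - 1, p.2) := by
  rw [Aop, e, Finsupp.lift_apply, Finsupp.sum_single_index (by simp), one_smul]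

lemma op_rel (hq1 : q ≠ 1) :
    (Aop K q) * (Bop K) = q • ((Bop K) * (Aop K q)) + 1 := by
  apply Finsupp.lhom_ext
  intro p b
  have hb : (Finsupp.single p b : P K) = b • e p := by
    rw [e, Finsupp.smul_single, smul_eq_mul, mul_one]
  rw [hb]
  simp only [LinearMap.add_apply, LinearMap.smul_apply, Module.End.mul_apply, Module.End.one_apply,
    map_smul]
  rw [Bop_e, Aop_e]
  simp only [map_add, map_smul, Bop_e, Aop_e]
  rcases p with ⟨i, j⟩
  simp only
  have h1 : (i + 1) - 1 = i := by omega
  rw [h1, qInt_succ' hq1 i]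
  cases i with
  | zero =>
      simp only [Nat.cast_zero, qInt_zero hq1]
      simp only [pow_zero, zero_smul, add_zero, smul_add, smul_smul, pow_succ, pow_zero, one_mul]
      module
  | succ k =>
      have h2 : (k + 1) - 1 + 1 = k + 1 := by omega
      have hk : q ^ k + qInt K q k = 1 + q * qInt K q k := by
        rw [← qInt_succ' hq1 k, qInt_succ hq1 k]; ring
      rw [h2]
      have hk : q ^ k + qInt K q k = 1 + q * qInt K q k := by
        rw [(qInt_succ' hq1 k).symm.trans (qInt_succ hq1 k)]; ring
      have hk2 : q ^ (k+1) + qInt K q ((k+1 : ℕ) : ℤ) = 1 + q * qInt K q ((k+1 : ℕ) : ℤ) := by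
        rw [(qInt_succ' hq1 (k+1)).symm.trans (qInt_succ hq1 (k+1))]; ring
      simp only [smul_add, smul_smul, pow_succ]
      match_scalars <;> push_cast at hk hk2 ⊢ <;> first
        | ring1
        | linear_combination (b * q) * hk
        | linear_combination b * hk2

end QHAux

namespace QHAux2
open QHAux

variable {K : Type*} [Field K] {q : K}

variable (K q) in
def Psi : FreeAlgebra K (Fin 2) →ₐ[K] Module.End K (P K) :=
  FreeAlgebra.lift K ![Aop K q, Bop K]

lemma Psi_rel (hq1 : q ≠ 1) : ∀ ⦃x y : FreeAlgebra K (Fin 2)⦄,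
    qHeisRel K q x y → Psi K q x = Psi K q y := by
  rintro x y ⟨⟩
  simp only [map_mul, map_add, map_smul, map_one, Psi, FreeAlgebra.lift_ι_apply]
  simpa using op_rel hq1

variable (K q) in
def Phi (hq1 : q ≠ 1) : qHeis K q →ₐ[K] Module.End K (P K) :=
  RingQuot.liftAlgHom K ⟨Psi K q, Psi_rel hq1⟩

lemma Phi_A (hq1 : q ≠ 1) : Phi K q hq1 (qA K q) = Aop K q := by
  rw [qA, Phi, RingQuot.liftAlgHom_mkAlgHom_apply]
  simp [Psi, FreeAlgebra.lift_ι_apply]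

lemma Phi_B (hq1 : q ≠ 1) : Phi K q hq1 (qB K q) = Bop K := by
  rw [qB, Phi, RingQuot.liftAlgHom_mkAlgHom_apply]
  simp [Psi, FreeAlgebra.lift_ι_apply]

lemma AB_rel : qA K q * qB K q = q • (qB K q * qA K q) + 1 := by
  have h := RingQuot.mkAlgHom_rel K (qHeisRel.rel (K := K) (q := q))
  simpa only [map_mul, map_add, map_smul, map_one, qA, qB] using h

lemma qInt_one (hq1 : q ≠ 1) : qInt K q (1 : ℤ) = 1 := by
  have h := qInt_succ hq1 0
  norm_num [qInt_zero hq1] at h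
  exact_mod_cast h

/-- A · Bⁿ⁺¹ = qⁿ⁺¹ • Bⁿ⁺¹A + {n+1} • Bⁿ -/
lemma A_mul_B_pow (hq1 : q ≠ 1) (n : ℕ) :
    qA K q * qB K q ^ (n + 1) =
      (q ^ (n + 1)) • (qB K q ^ (n + 1) * qA K q) + qInt K q (n + 1 : ℕ) • qB K q ^ n := by
  induction n with
  | zero =>
      norm_num [qInt_one hq1]
      simpa using AB_rel (K := K) (q := q)
  | succ n ih =>
      have h1 : qA K q * qB K q ^ (n + 2) = (qA K q * qB K q) * qB K q ^ (n + 1) := by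
        rw [pow_succ' (qB K q) (n + 1), ← mul_assoc]
      rw [h1, AB_rel, add_mul, one_mul, smul_mul_assoc, mul_assoc, ih, mul_add]
      simp only [mul_smul_comm, smul_smul, smul_add]
      rw [← mul_assoc (qB K q), ← pow_succ' (qB K q) (n + 1), ← pow_succ' (qB K q) n,
        qInt_succ hq1 (n + 1), add_smul, one_smul]
      match_scalars <;> ring

/-- Aⁿ⁺¹ · B = qⁿ⁺¹ • BAⁿ⁺¹ + {n+1} • Aⁿ -/
lemma A_pow_mul_B (hq1 : q ≠ 1) (n : ℕ) :
    qA K q ^ (n + 1) * qB K q =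
      (q ^ (n + 1)) • (qB K q * qA K q ^ (n + 1)) + qInt K q (n + 1 : ℕ) • qA K q ^ n := by
  induction n with
  | zero =>
      norm_num [qInt_one hq1]
      simpa using AB_rel (K := K) (q := q)
  | succ n ih =>
      have h1 : qA K q ^ (n + 2) * qB K q = qA K q * (qA K q ^ (n + 1) * qB K q) := by
        rw [pow_succ' (qA K q) (n + 1), mul_assoc]
      rw [h1, ih, mul_add]
      simp only [mul_smul_comm, smul_smul]
      rw [← mul_assoc (qA K q) (qB K q), AB_rel, add_mul, one_mul, smul_mul_assoc, mul_assoc,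
        ← pow_succ' (qA K q) (n + 1), ← pow_succ' (qA K q) n,
        qInt_succ' hq1 (n + 1), add_smul]
      simp only [smul_add, smul_smul]
      match_scalars <;> ring

end QHAux2

namespace QHAux3
open QHAux QHAux2

variable {K : Type*} [Field K] {q : K}

lemma adjoin_top : Algebra.adjoin K ({qA K q, qB K q} : Set (qHeis K q)) = ⊤ := by
  rw [eq_top_iff]
  rintro x -
  obtain ⟨y, rfl⟩ := RingQuot.mkAlgHom_surjective K (qHeisRel K q) x
  induction y using FreeAlgebra.induction with
  | grade0 r =>
      rw [AlgHom.commutes]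
      exact Subalgebra.algebraMap_mem _ r
  | grade1 i =>
      fin_cases i
      · exact Algebra.subset_adjoin (Or.inl rfl)
      · exact Algebra.subset_adjoin (Or.inr rfl)
  | mul a b ha hb => rw [map_mul]; exact mul_mem ha hb
  | add a b ha hb => rw [map_add]; exact add_mem ha hb

lemma mem_center_of_commutes {x : qHeis K q}
    (hA : x * qA K q = qA K q * x) (hB : x * qB K q = qB K q * x) :
    x ∈ Subalgebra.center K (qHeis K q) := by
  rw [Subalgebra.mem_center_iff]
  intro g
  have hg : g ∈ Algebra.adjoin K ({qA K q, qB K q} : Set (qHeis K q)) := by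
    rw [adjoin_top]; trivial
  induction hg using Algebra.adjoin_induction with
  | mem a ha =>
      rcases ha with rfl | rfl
      · exact hA.symm
      · exact hB.symm
  | algebraMap r => exact (Algebra.commutes r x)
  | add a b _ _ ha hb => rw [add_mul, mul_add, ha, hb]
  | mul a b _ _ ha hb => rw [mul_assoc, hb, ← mul_assoc, ha, mul_assoc]

section pows
variable (hq1 : q ≠ 1) (d : ℕ) (hd : 0 < d) (hqd : q ^ d = 1)

include hq1 hd hqd in
lemma A_pow_d_central : qA K q ^ d ∈ Subalgebra.center K (qHeis K q) := by
  apply mem_center_of_commutes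
  · rw [← pow_succ, ← pow_succ']
  · obtain ⟨n, rfl⟩ : ∃ n, d = n + 1 := ⟨d - 1, by omega⟩
    rw [A_pow_mul_B hq1 n, hqd, (qInt_eq_zero_iff hq1 (n + 1)).2 hqd, one_smul, zero_smul,
      add_zero]

include hq1 hd hqd in
lemma B_pow_d_central : qB K q ^ d ∈ Subalgebra.center K (qHeis K q) := by
  apply mem_center_of_commutes
  · obtain ⟨n, rfl⟩ : ∃ n, d = n + 1 := ⟨d - 1, by omega⟩
    rw [A_mul_B_pow hq1 n, hqd, (qInt_eq_zero_iff hq1 (n + 1)).2 hqd, one_smul, zero_smul,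
      add_zero]
  · rw [← pow_succ, ← pow_succ']

end pows

/-- The straightening monomials `Bⁱ Aʲ`. -/
def v (p : ℕ × ℕ) : qHeis K q := qB K q ^ p.1 * qA K q ^ p.2

lemma v_mul_A (p : ℕ × ℕ) : v (q := q) p * qA K q = v (p.1, p.2 + 1) := by
  rw [v, v, mul_assoc, ← pow_succ]

lemma v_mul_B (hq1 : q ≠ 1) (p : ℕ × ℕ) :
    v (q := q) p * qB K q =
      (q ^ p.2) • v (p.1 + 1, p.2) + qInt K q p.2 • v (p.1, p.2 - 1) := by
  rcases p with ⟨i, j⟩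
  cases j with
  | zero =>
      simp only [v, pow_zero, mul_one, qInt_zero hq1 (K := K), Nat.cast_zero, zero_smul, add_zero,
        one_smul, ← pow_succ]
  | succ n =>
      simp only [v]
      rw [mul_assoc, A_pow_mul_B hq1 n, mul_add, mul_smul_comm, mul_smul_comm, ← mul_assoc,
        ← pow_succ]
      norm_num

lemma span_v_top (hq1 : q ≠ 1) :
    Submodule.span K (Set.range (v (K := K) (q := q))) = ⊤ := by
  set M := Submodule.span K (Set.range (v (K := K) (q := q))) with hM
  have hv : ∀ p, v (K := K) (q := q) p ∈ M := fun p =>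
    Submodule.subset_span (Set.mem_range_self p)
  have hA : ∀ m ∈ M, m * qA K q ∈ M := by
    intro m hm
    induction hm using Submodule.span_induction with
    | mem x hx =>
        obtain ⟨p, rfl⟩ := hx
        rw [v_mul_A]; exact hv _
    | zero => rw [zero_mul]; exact zero_mem _
    | add x y _ _ hx hy => rw [add_mul]; exact add_mem hx hy
    | smul a x _ hx => rw [smul_mul_assoc]; exact Submodule.smul_mem _ _ hx
  have hB : ∀ m ∈ M, m * qB K q ∈ M := by
    intro m hm
    induction hm using Submodule.span_induction with
    | mem x hx =>
        obtain ⟨p, rfl⟩ := hx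
        rw [v_mul_B hq1]
        exact add_mem (Submodule.smul_mem _ _ (hv _)) (Submodule.smul_mem _ _ (hv _))
    | zero => rw [zero_mul]; exact zero_mem _
    | add x y _ _ hx hy => rw [add_mul]; exact add_mem hx hy
    | smul a x _ hx => rw [smul_mul_assoc]; exact Submodule.smul_mem _ _ hx
  have key : ∀ x : qHeis K q, ∀ m ∈ M, m * x ∈ M := by
    intro x
    have hx : x ∈ Algebra.adjoin K ({qA K q, qB K q} : Set (qHeis K q)) := by
      rw [adjoin_top]; trivial
    induction hx using Algebra.adjoin_induction with
    | mem a ha =>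
        rcases ha with rfl | rfl
        · exact hA
        · exact hB
    | algebraMap r =>
        intro m hm
        rw [← Algebra.commutes, ← Algebra.smul_def]
        exact Submodule.smul_mem _ _ hm
    | add a b _ _ ha hb =>
        intro m hm
        rw [mul_add]
        exact add_mem (ha m hm) (hb m hm)
    | mul a b _ _ ha hb =>
        intro m hm
        rw [← mul_assoc]
        exact hb _ (ha m hm)
  rw [eq_top_iff]
  rintro x -
  have h1 : (1 : qHeis K q) ∈ M := by
    have := hv (0, 0)
    simpa [v] using this
  simpa using key x 1 h1

end QHAux3

namespace QHAux4
open QHAux QHAux2 QHAux3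

variable {K : Type*} [Field K] {q : K}

variable (K q) in
def phi (hq1 : q ≠ 1) : qHeis K q →ₗ[K] P K :=
  LinearMap.applyₗ (e (0, 0)) ∘ₗ (Phi K q hq1).toLinearMap

lemma phi_apply (hq1 : q ≠ 1) (x : qHeis K q) :
    phi K q hq1 x = Phi K q hq1 x (e (0, 0)) := rfl

lemma Aop_pow (hq1 : q ≠ 1) (j : ℕ) :
    ((Aop K q) ^ j) (e (0, 0)) = e (0, j) := by
  induction j with
  | zero => simp
  | succ j ih =>
      rw [pow_succ' (Aop K q) j, Module.End.mul_apply, ih, Aop_e]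
      simp [qInt_zero hq1]

lemma Bop_pow (i j : ℕ) : ((Bop K) ^ i) (e (0, j) : P K) = e (i, j) := by
  induction i with
  | zero => simp
  | succ i ih =>
      rw [pow_succ' (Bop K) i, Module.End.mul_apply, ih, Bop_e]

lemma phi_v (hq1 : q ≠ 1) (p : ℕ × ℕ) : phi K q hq1 (v p) = e p := by
  rw [phi_apply, v, map_mul, map_pow, map_pow, Phi_A hq1, Phi_B hq1, Module.End.mul_apply,
    Aop_pow hq1, Bop_pow]

lemma comA (hq1 : q ≠ 1) (p : ℕ × ℕ) :
    qA K q * v p - v (q := q) p * qA K q =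
      (q ^ p.1 - 1) • v (p.1, p.2 + 1) + qInt K q p.1 • v (p.1 - 1, p.2) := by
  rcases p with ⟨i, j⟩
  cases i with
  | zero =>
      simp [v, qInt_zero hq1, ← pow_succ, ← pow_succ']
  | succ i =>
      simp only [v]
      rw [← mul_assoc, A_mul_B_pow hq1 i, add_mul, smul_mul_assoc, smul_mul_assoc, mul_assoc,
        ← pow_succ', mul_assoc, ← pow_succ]
      have h1 : (i + 1) - 1 = i := by omega
      rw [h1]
      match_scalars <;> push_cast <;> ring

lemma comB (hq1 : q ≠ 1) (p : ℕ × ℕ) :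
    v (q := q) p * qB K q - qB K q * v p =
      (q ^ p.2 - 1) • v (p.1 + 1, p.2) + qInt K q p.2 • v (p.1, p.2 - 1) := by
  rcases p with ⟨i, j⟩
  have h2 : qB K q * v (q := q) (i, j) = v (i + 1, j) := by
    rw [v, v, ← mul_assoc, ← pow_succ']
  rw [v_mul_B hq1, h2]
  match_scalars <;> ring

/-- Evaluating a sum of shifted basis vectors at a point. -/
lemma sum_eval (c : (ℕ × ℕ) →₀ K) (h : ℕ × ℕ → K) (σ : ℕ × ℕ → ℕ × ℕ) (t p₀ : ℕ × ℕ)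
    (hp : ∀ p, h p ≠ 0 → σ p = t → p = p₀) (hσ : σ p₀ = t) :
    (c.sum fun p α => α * (h p * (e (σ p) : P K) t)) = c p₀ * h p₀ := by
  rw [Finsupp.sum, Finset.sum_eq_single p₀]
  · rw [e, Finsupp.single_apply, if_pos hσ, mul_one]
  · intro b hb hne
    by_cases hz : h b = 0
    · rw [hz, zero_mul, mul_zero]
    · have hne2 : σ b ≠ t := fun hc => hne (hp b hz hc)
      rw [e, Finsupp.single_apply, if_neg hne2, mul_zero, mul_zero]
  · intro h0
    rw [Finsupp.notMem_support_iff.1 h0, zero_mul]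

end QHAux4

namespace QHAux5
open QHAux QHAux2 QHAux3 QHAux4

variable {K : Type*} [Field K] {q : K}

lemma pow_eq_one_of_dvd {d m : ℕ} (hqd : q ^ d = 1) (h : d ∣ m) : q ^ m = 1 := by
  obtain ⟨k, rfl⟩ := h
  rw [pow_mul, hqd, one_pow]

lemma pow_ne_one_of_not_dvd {d : ℕ} (hd : 0 < d) (hqd : q ^ d = 1)
    (hmin : ∀ k : ℕ, 0 < k → k < d → q ^ k ≠ 1) {a : ℕ} (h : ¬ d ∣ a) : q ^ a ≠ 1 := by
  have h1 : q ^ a = q ^ (a % d) := by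
    conv_lhs => rw [← Nat.div_add_mod a d]
    rw [pow_add, pow_mul, hqd, one_pow, one_mul]
  rw [h1]
  refine hmin (a % d) ?_ (Nat.mod_lt _ hd)
  rcases Nat.eq_zero_or_pos (a % d) with h0 | h0
  · exact absurd (Nat.dvd_of_mod_eq_zero h0) h
  · exact h0

lemma descent (hq1 : q ≠ 1) {d : ℕ} (hd : 0 < d) (hqd : q ^ d = 1)
    (hmin : ∀ k : ℕ, 0 < k → k < d → q ^ k ≠ 1)
    (f : ℕ → ℕ → K) (N : ℕ) (hN : ∀ a b, N ≤ a → f a b = 0)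
    (rel : ∀ a b, f a b * (q ^ a - 1) + f (a + 1) (b + 1) * qInt K q (a + 1 : ℕ) = 0) :
    ∀ a b, ¬ d ∣ a → f a b = 0 := by
  suffices H : ∀ k a b, N ≤ a + k → ¬ d ∣ a → f a b = 0 by
    intro a b hnd
    exact H N a b (by omega) hnd
  intro k
  induction k with
  | zero =>
      intro a b h _
      exact hN a b (by omega)
  | succ k ih =>
      intro a b h hnd
      by_cases hNa : N ≤ a
      · exact hN a b hNa
      have hqa : q ^ a - 1 ≠ 0 :=
        sub_ne_zero.2 (pow_ne_one_of_not_dvd hd hqd hmin hnd)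
      have hrel := rel a b
      by_cases hd2 : d ∣ (a + 1)
      · rw [(qInt_eq_zero_iff hq1 (a + 1)).2 (pow_eq_one_of_dvd hqd hd2), mul_zero,
          add_zero] at hrel
        exact (mul_eq_zero.1 hrel).resolve_right hqa
      · have h2 : f (a + 1) (b + 1) = 0 := ih (a + 1) (b + 1) (by omega) hd2
        rw [h2, zero_mul, add_zero] at hrel
        exact (mul_eq_zero.1 hrel).resolve_right hqa

end QHAux5


open QHAux QHAux2 QHAux3 QHAux4 QHAux5

/-- If `q ≠ 1` is a root of unity of multiplicative order `d`, then the center of the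
`q`-deformed Heisenberg algebra `H_q` over `K` is the `K`-subalgebra generated by `A^d`
and `B^d`: `Z(H_q) = K[A^d, B^d]`. -/
theorem qHeis_center_eq_adjoin_of_torsion_type
    {K : Type*} [Field K] (q : K) (hq0 : q ≠ 0) (hq1 : q ≠ 1)
    (d : ℕ) (hd : 0 < d) (hqd : q ^ d = 1)
    (hmin : ∀ k : ℕ, 0 < k → k < d → q ^ k ≠ 1) :
    Subalgebra.center K (qHeis K q) =
      Algebra.adjoin K ({qA K q ^ d, qB K q ^ d} : Set (qHeis K q)) := by
  classical
  refine le_antisymm ?hard ?easy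
  case easy =>
    apply Algebra.adjoin_le
    rintro x hx
    rcases hx with rfl | rfl
    · exact A_pow_d_central hq1 d hd hqd
    · exact B_pow_d_central hq1 d hd hqd
  case hard =>
    intro z hz
    have hzc := Subalgebra.mem_center_iff.1 hz
    have hzspan : z ∈ Submodule.span K (Set.range (v (K := K) (q := q))) := by
      rw [span_v_top hq1]; trivial
    obtain ⟨c, hc⟩ := Finsupp.mem_span_range_iff_exists_finsupp.1 hzspan
    -- the A-relation
    set TA : qHeis K q →ₗ[K] P K :=
      (phi K q hq1) ∘ₗ (LinearMap.mulLeft K (qA K q) - LinearMap.mulRight K (qA K q)) with hTA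
    have hTAz : TA z = 0 := by
      rw [hTA, LinearMap.comp_apply, LinearMap.sub_apply, LinearMap.mulLeft_apply,
        LinearMap.mulRight_apply, hzc (qA K q), sub_self, map_zero]
    have hTAv : ∀ p : ℕ × ℕ, TA (v p) =
        (q ^ p.1 - 1) • e (p.1, p.2 + 1) + qInt K q p.1 • e (p.1 - 1, p.2) := by
      intro p
      rw [hTA, LinearMap.comp_apply, LinearMap.sub_apply, LinearMap.mulLeft_apply,
        LinearMap.mulRight_apply]
      rw [show qA K q * v p - v (q := q) p * qA K q =
        (q ^ p.1 - 1) • v (p.1, p.2 + 1) + qInt K q p.1 • v (p.1 - 1, p.2) from comA hq1 p]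
      rw [map_add, map_smul, map_smul, phi_v hq1, phi_v hq1]
    have hsumA : (c.sum fun p α => α •
        ((q ^ p.1 - 1) • (e (p.1, p.2 + 1) : P K) + qInt K q p.1 • e (p.1 - 1, p.2))) = 0 := by
      have h1 : TA (c.sum fun p α => α • v p) = c.sum fun p α => α • TA (v p) := by
        rw [map_finsuppSum]
        exact Finsupp.sum_congr fun p _ => map_smul _ _ _
      rw [hc, hTAz] at h1
      rw [← h1.symm]
      exact Finsupp.sum_congr fun p _ => by rw [hTAv]
    have relA : ∀ a b : ℕ,
        c (a, b) * (q ^ a - 1) + c (a + 1, b + 1) * qInt K q (a + 1 : ℕ) = 0 := by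
      intro a b
      have h0 := congrArg (fun w : P K => w (a, b + 1)) hsumA
      simp only [Finsupp.coe_zero, Pi.zero_apply] at h0
      rw [Finsupp.sum_apply] at h0
      rw [Finsupp.sum_congr (g2 := fun p α =>
          α * ((q ^ p.1 - 1) * (e (p.1, p.2 + 1) : P K) (a, b + 1)) +
          α * (qInt K q p.1 * (e (p.1 - 1, p.2) : P K) (a, b + 1)))
        (fun p _ => by
          simp only [Finsupp.smul_apply, Finsupp.add_apply, smul_eq_mul]
          ring)] at h0
      rw [Finsupp.sum_add] at h0
      rw [sum_eval c (fun p => q ^ p.1 - 1) (fun p => (p.1, p.2 + 1)) (a, b + 1) (a, b)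
          (fun p _ hp => by
            rcases p with ⟨x, y⟩
            simp only [Prod.mk.injEq] at hp ⊢
            omega)
          (by simp)] at h0
      rw [sum_eval c (fun p => qInt K q p.1) (fun p => (p.1 - 1, p.2)) (a, b + 1) (a + 1, b + 1)
          (fun p hz hp => by
            have hp1 : p.1 ≠ 0 := by
              intro h00
              apply hz
              show qInt K q (p.1 : ℤ) = 0
              rw [h00]
              exact_mod_cast qInt_zero hq1
            rcases p with ⟨x, y⟩
            simp only [Prod.mk.injEq] at hp ⊢
            simp only at hp1
            omega)
          (by simp)] at h0
      exact h0
    -- the B-relation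
    set TB : qHeis K q →ₗ[K] P K :=
      (phi K q hq1) ∘ₗ (LinearMap.mulRight K (qB K q) - LinearMap.mulLeft K (qB K q)) with hTB
    have hTBz : TB z = 0 := by
      rw [hTB, LinearMap.comp_apply, LinearMap.sub_apply, LinearMap.mulLeft_apply,
        LinearMap.mulRight_apply, hzc (qB K q), sub_self, map_zero]
    have hTBv : ∀ p : ℕ × ℕ, TB (v p) =
        (q ^ p.2 - 1) • e (p.1 + 1, p.2) + qInt K q p.2 • e (p.1, p.2 - 1) := by
      intro p
      rw [hTB, LinearMap.comp_apply, LinearMap.sub_apply, LinearMap.mulLeft_apply,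
        LinearMap.mulRight_apply]
      rw [show v (q := q) p * qB K q - qB K q * v p =
        (q ^ p.2 - 1) • v (p.1 + 1, p.2) + qInt K q p.2 • v (p.1, p.2 - 1) from comB hq1 p]
      rw [map_add, map_smul, map_smul, phi_v hq1, phi_v hq1]
    have hsumB : (c.sum fun p α => α •
        ((q ^ p.2 - 1) • (e (p.1 + 1, p.2) : P K) + qInt K q p.2 • e (p.1, p.2 - 1))) = 0 := by
      have h1 : TB (c.sum fun p α => α • v p) = c.sum fun p α => α • TB (v p) := by
        rw [map_finsuppSum]
        exact Finsupp.sum_congr fun p _ => map_smul _ _ _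
      rw [hc, hTBz] at h1
      rw [← h1.symm]
      exact Finsupp.sum_congr fun p _ => by rw [hTBv]
    have relB : ∀ a b : ℕ,
        c (a, b) * (q ^ b - 1) + c (a + 1, b + 1) * qInt K q (b + 1 : ℕ) = 0 := by
      intro a b
      have h0 := congrArg (fun w : P K => w (a + 1, b)) hsumB
      simp only [Finsupp.coe_zero, Pi.zero_apply] at h0
      rw [Finsupp.sum_apply] at h0
      rw [Finsupp.sum_congr (g2 := fun p α =>
          α * ((q ^ p.2 - 1) * (e (p.1 + 1, p.2) : P K) (a + 1, b)) +
          α * (qInt K q p.2 * (e (p.1, p.2 - 1) : P K) (a + 1, b)))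
        (fun p _ => by
          simp only [Finsupp.smul_apply, Finsupp.add_apply, smul_eq_mul]
          ring)] at h0
      rw [Finsupp.sum_add] at h0
      rw [sum_eval c (fun p => q ^ p.2 - 1) (fun p => (p.1 + 1, p.2)) (a + 1, b) (a, b)
          (fun p _ hp => by
            rcases p with ⟨x, y⟩
            simp only [Prod.mk.injEq] at hp ⊢
            omega)
          (by simp)] at h0
      rw [sum_eval c (fun p => qInt K q p.2) (fun p => (p.1, p.2 - 1)) (a + 1, b) (a + 1, b + 1)
          (fun p hz hp => by
            have hp1 : p.2 ≠ 0 := by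
              intro h00
              apply hz
              show qInt K q (p.2 : ℤ) = 0
              rw [h00]
              exact_mod_cast qInt_zero hq1
            rcases p with ⟨x, y⟩
            simp only [Prod.mk.injEq] at hp ⊢
            simp only at hp1
            omega)
          (by simp)] at h0
      exact h0
    -- descent
    have cA : ∀ p : ℕ × ℕ, ¬ d ∣ p.1 → c p = 0 := by
      intro p hp
      have hNA : ∀ a b : ℕ, (c.support.sup Prod.fst) + 1 ≤ a → c (a, b) = 0 := by
        intro a b h
        by_contra hne
        have hmem : (a, b) ∈ c.support := Finsupp.mem_support_iff.2 hne
        have := Finset.le_sup (f := Prod.fst) hmem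
        simp only at this
        omega
      have := descent hq1 hd hqd hmin (fun a b => c (a, b)) _ hNA
        (fun a b => relA a b) p.1 p.2 hp
      simpa using this
    have cB : ∀ p : ℕ × ℕ, ¬ d ∣ p.2 → c p = 0 := by
      intro p hp
      have hNB : ∀ a b : ℕ, (c.support.sup Prod.snd) + 1 ≤ a → c (b, a) = 0 := by
        intro a b h
        by_contra hne
        have hmem : (b, a) ∈ c.support := Finsupp.mem_support_iff.2 hne
        have := Finset.le_sup (f := Prod.snd) hmem
        simp only at this
        omega
      have := descent hq1 hd hqd hmin (fun a b => c (b, a)) _ hNB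
        (fun a b => relB b a) p.2 p.1 hp
      simpa using this
    -- assemble
    rw [← hc, Finsupp.sum]
    refine sum_mem fun p hp => ?_
    have h1 : d ∣ p.1 := by
      by_contra h
      exact Finsupp.mem_support_iff.1 hp (cA p h)
    have h2 : d ∣ p.2 := by
      by_contra h
      exact Finsupp.mem_support_iff.1 hp (cB p h)
    obtain ⟨m, hm⟩ := h1
    obtain ⟨n, hn⟩ := h2
    have hv : v (q := q) p = (qB K q ^ d) ^ m * (qA K q ^ d) ^ n := by
      rw [v, ← pow_mul, ← pow_mul, ← hm, ← hn]
    rw [hv]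
    have hBmem : qB K q ^ d ∈ Algebra.adjoin K ({qA K q ^ d, qB K q ^ d} : Set (qHeis K q)) :=
      Algebra.subset_adjoin (by simp)
    have hAmem : qA K q ^ d ∈ Algebra.adjoin K ({qA K q ^ d, qB K q ^ d} : Set (qHeis K q)) :=
      Algebra.subset_adjoin (by simp)
    exact Subalgebra.smul_mem _ (mul_mem (pow_mem hBmem m) (pow_mem hAmem n)) _

end
end

section
/- Let K be a field and let q ∈ K, q ≠ 1, be a root of unity of multiplicative order p (i.e., p is the smallest positive integer with q^p = 1). Then the q-deformed Heisenberg algebra H_q over K, viewed as a module over its center Z(H_q), is spanned by the p² elements {B^i A^j : 0 ≤ i, j < p}; that is, every element of H_q is a Z(H_q)-linear combination of the B^i A^j with 0 ≤ i, j < p. -/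
noncomputable section

section Aux

variable {K : Type*} [Field K] (q : K)

lemma qHeis_induction (P : qHeis K q → Prop)
    (halg : ∀ r : K, P (algebraMap K (qHeis K q) r))
    (hA : P (qA K q)) (hB : P (qB K q))
    (hmul : ∀ x y, P x → P y → P (x * y))
    (hadd : ∀ x y, P x → P y → P (x + y)) :
    ∀ x, P x := by
  intro x
  obtain ⟨y, rfl⟩ := RingQuot.mkAlgHom_surjective K (qHeisRel K q) x
  induction y with
  | grade0 r => simpa using halg r
  | grade1 i =>
    fin_cases i
    · exact hA
    · exact hB
  | mul a b ha hb => rw [map_mul]; exact hmul _ _ ha hb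
  | add a b ha hb => rw [map_add]; exact hadd _ _ ha hb

lemma qAB : qA K q * qB K q = q • (qB K q * qA K q) + 1 := by
  have := RingQuot.mkAlgHom_rel K (qHeisRel.rel (K := K) (q := q))
  simpa [qA, qB, map_mul, map_add, map_one, map_smul] using this

-- A^(n+1) * B = q^(n+1) • (B * A^(n+1)) + (∑ k < n+1, q^k) • A^n
lemma qApow_mul_B (n : ℕ) :
    qA K q ^ (n + 1) * qB K q =
      q ^ (n + 1) • (qB K q * qA K q ^ (n + 1)) +
        (∑ k ∈ Finset.range (n + 1), q ^ k) • qA K q ^ n := by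
  induction n with
  | zero => simpa using qAB q
  | succ n ih =>
    rw [pow_succ' (qA K q) (n + 1), mul_assoc, ih, mul_add, mul_smul_comm, mul_smul_comm,
      ← mul_assoc, qAB q, add_mul, smul_mul_assoc, one_mul]
    simp only [Finset.sum_range_succ, smul_add, smul_smul, add_smul, mul_assoc, ← pow_succ']
    rw [pow_succ q (n + 1)]
    abel

-- A * B^(n+1) = q^(n+1) • (B^(n+1) * A) + (∑ k < n+1, q^k) • B^n
lemma qA_mul_Bpow (n : ℕ) :
    qA K q * qB K q ^ (n + 1) =
      q ^ (n + 1) • (qB K q ^ (n + 1) * qA K q) +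
        (∑ k ∈ Finset.range (n + 1), q ^ k) • qB K q ^ n := by
  induction n with
  | zero => simpa using qAB q
  | succ n ih =>
    rw [pow_succ (qB K q) (n + 1), ← mul_assoc, ih, add_mul, smul_mul_assoc, smul_mul_assoc,
      mul_assoc, qAB q, mul_add, mul_smul_comm, mul_one]
    simp only [Finset.sum_range_succ, smul_add, smul_smul, add_smul, ← mul_assoc, ← pow_succ]
    rw [pow_succ q (n + 1)]
    abel

variable {q} (hq1 : q ≠ 1) {p : ℕ} (hp : 0 < p) (hqp : q ^ p = 1)
include hq1 hqp

lemma geomsum_zero : (∑ k ∈ Finset.range p, q ^ k) = 0 := by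
  rw [geom_sum_eq hq1, hqp, sub_self, zero_div]

include hp

lemma qApow_comm : ∀ g : qHeis K q, g * qA K q ^ p = qA K q ^ p * g := by
  have key : qA K q ^ p * qB K q = qB K q * qA K q ^ p := by
    obtain ⟨n, rfl⟩ := Nat.exists_eq_add_of_lt hp
    rw [zero_add] at *
    rw [qApow_mul_B, geomsum_zero hq1 hqp, zero_smul, add_zero, hqp, one_smul]
  refine qHeis_induction q _ (fun r => ?_) ?_ ?_ (fun x y hx hy => ?_) (fun x y hx hy => ?_)
  · rw [Algebra.commutes]
  · rw [← pow_succ, ← pow_succ']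
  · exact key.symm
  · rw [mul_assoc, hy, ← mul_assoc, hx, mul_assoc]
  · rw [add_mul, hx, hy, mul_add]

lemma qBpow_comm : ∀ g : qHeis K q, g * qB K q ^ p = qB K q ^ p * g := by
  have key : qA K q * qB K q ^ p = qB K q ^ p * qA K q := by
    obtain ⟨n, rfl⟩ := Nat.exists_eq_add_of_lt hp
    rw [zero_add] at *
    rw [qA_mul_Bpow, geomsum_zero hq1 hqp, zero_smul, add_zero, hqp, one_smul]
  refine qHeis_induction q _ (fun r => ?_) ?_ ?_ (fun x y hx hy => ?_) (fun x y hx hy => ?_)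
  · rw [Algebra.commutes]
  · exact key
  · rw [← pow_succ, ← pow_succ']
  · rw [mul_assoc, hy, ← mul_assoc, hx, mul_assoc]
  · rw [add_mul, hx, hy, mul_add]

lemma qApow_central : qA K q ^ p ∈ Subalgebra.center K (qHeis K q) :=
  Subalgebra.mem_center_iff.mpr (qApow_comm hq1 hp hqp)

lemma qBpow_central : qB K q ^ p ∈ Subalgebra.center K (qHeis K q) :=
  Subalgebra.mem_center_iff.mpr (qBpow_comm hq1 hp hqp)

omit hq1 hp hqp in
/-- Every element lies in the `K`-span of the monomials `B^i A^j`. -/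
lemma qHeis_mem_span (x : qHeis K q) :
    x ∈ Submodule.span K {y : qHeis K q | ∃ i j : ℕ, y = qB K q ^ i * qA K q ^ j} := by
  set M := Submodule.span K {y : qHeis K q | ∃ i j : ℕ, y = qB K q ^ i * qA K q ^ j} with hM
  have hmem : ∀ i j : ℕ, qB K q ^ i * qA K q ^ j ∈ M :=
    fun i j => Submodule.subset_span ⟨i, j, rfl⟩
  have key : ∀ x : qHeis K q, ∀ m ∈ M, x * m ∈ M := by
    refine qHeis_induction q _ (fun r m hm => ?_) (fun m hm => ?_) (fun m hm => ?_)
      (fun x y hx hy m hm => ?_) (fun x y hx hy m hm => ?_)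
    · rw [← Algebra.smul_def]; exact M.smul_mem r hm
    · -- left multiplication by A
      induction hm using Submodule.span_induction with
      | mem z hz =>
        obtain ⟨i, j, rfl⟩ := hz
        rcases i with _ | n
        · rw [pow_zero, one_mul, ← pow_succ']
          simpa using hmem 0 (j + 1)
        · rw [← mul_assoc, qA_mul_Bpow, add_mul, smul_mul_assoc, smul_mul_assoc,
            mul_assoc _ (qA K q) (qA K q ^ j), ← pow_succ']
          exact M.add_mem (M.smul_mem _ (hmem (n + 1) (j + 1))) (M.smul_mem _ (hmem n j))
      | zero => rw [mul_zero]; exact M.zero_mem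
      | add u v hu hv hu' hv' => rw [mul_add]; exact M.add_mem hu' hv'
      | smul a u hu hu' => rw [mul_smul_comm]; exact M.smul_mem a hu'
    · -- left multiplication by B
      induction hm using Submodule.span_induction with
      | mem z hz =>
        obtain ⟨i, j, rfl⟩ := hz
        rw [← mul_assoc, ← pow_succ']
        exact hmem (i + 1) j
      | zero => rw [mul_zero]; exact M.zero_mem
      | add u v hu hv hu' hv' => rw [mul_add]; exact M.add_mem hu' hv'
      | smul a u hu hu' => rw [mul_smul_comm]; exact M.smul_mem a hu'
    · rw [mul_assoc]; exact hx _ (hy _ hm)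
    · rw [add_mul]; exact M.add_mem (hx _ hm) (hy _ hm)
  have h1 : (1 : qHeis K q) ∈ M := by simpa using hmem 0 0
  simpa using key x 1 h1

end Aux

/-- If `q ≠ 1` is a root of unity of multiplicative order `p`, then the `q`-deformed
Heisenberg algebra `H_q`, viewed as a module over its center, is spanned by the `p²`
elements `B^i A^j` with `0 ≤ i, j < p`: every element of `H_q` is a linear combination of
these with coefficients in the center `Z(H_q)`. -/
theorem qHeis_spanned_over_center_of_torsion_type
    {K : Type*} [Field K] (q : K) (hq0 : q ≠ 0) (hq1 : q ≠ 1)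
    (p : ℕ) (hp : 0 < p) (hqp : q ^ p = 1)
    (hmin : ∀ k : ℕ, 0 < k → k < p → q ^ k ≠ 1) :
    ∀ x : qHeis K q, ∃ c : Fin p × Fin p → qHeis K q,
      (∀ ij, c ij ∈ Subalgebra.center K (qHeis K q)) ∧
      x = ∑ ij : Fin p × Fin p,
            c ij * (qB K q ^ (ij.1 : ℕ) * qA K q ^ (ij.2 : ℕ)) := by
  intro x
  have hx := qHeis_mem_span (q := q) x
  induction hx using Submodule.span_induction with
  | mem z hz =>
    obtain ⟨i, j, rfl⟩ := hz
    set a := i / p with ha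
    set r := i % p with hr
    set b := j / p with hb
    set s := j % p with hs
    have hrp : r < p := Nat.mod_lt _ hp
    have hsp : s < p := Nat.mod_lt _ hp
    set z : qHeis K q := (qB K q ^ p) ^ a * (qA K q ^ p) ^ b with hz
    have hzc : z ∈ Subalgebra.center K (qHeis K q) :=
      mul_mem (pow_mem (qBpow_central hq1 hp hqp) a) (pow_mem (qApow_central hq1 hp hqp) b)
    set t : Fin p × Fin p := (⟨r, hrp⟩, ⟨s, hsp⟩) with ht
    refine ⟨fun ij => if ij = t then z else 0, fun ij => ?_, ?_⟩
    · dsimp only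
      split
      · exact hzc
      · exact zero_mem _
    · rw [Finset.sum_eq_single t]
      · dsimp only
        rw [if_pos rfl]
        have hBi : qB K q ^ i = (qB K q ^ p) ^ a * qB K q ^ r := by
          rw [← pow_mul, ← pow_add, Nat.div_add_mod]
        have hAj : qA K q ^ j = (qA K q ^ p) ^ b * qA K q ^ s := by
          rw [← pow_mul, ← pow_add, Nat.div_add_mod]
        have hcb : (qA K q ^ p) ^ b ∈ Subalgebra.center K (qHeis K q) :=
          pow_mem (qApow_central hq1 hp hqp) b
        rw [hBi, hAj, hz]
        simp only [mul_assoc]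
        congr 1
        rw [← mul_assoc, Subalgebra.mem_center_iff.mp hcb (qB K q ^ r), mul_assoc]
      · intro ij _ hij
        dsimp only
        rw [if_neg hij, zero_mul]
      · intro h
        exact absurd (Finset.mem_univ t) h
  | zero =>
    exact ⟨0, fun ij => zero_mem _, by simp⟩
  | add u v hu hv hu' hv' =>
    obtain ⟨c₁, hc₁, rfl⟩ := hu'
    obtain ⟨c₂, hc₂, rfl⟩ := hv'
    exact ⟨c₁ + c₂, fun ij => add_mem (hc₁ ij) (hc₂ ij), by
      rw [← Finset.sum_add_distrib]
      simp [add_mul]⟩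
  | smul a u hu hu' =>
    obtain ⟨c, hc, rfl⟩ := hu'
    refine ⟨fun ij => a • c ij, fun ij => ?_, ?_⟩
    · exact Subalgebra.smul_mem _ (hc ij) a
    · rw [Finset.smul_sum]
      simp [smul_mul_assoc]
end
end

section
/- Let K be a field of characteristic zero. Then the Heisenberg algebra H_1 = K⟨A,B⟩/⟨AB − BA − 1⟩ over K is a simple ring: its only two-sided ideals are the zero ideal and the whole algebra. -/
noncomputable section

namespace HeisAux

variable {K : Type*} [Field K]

local notation "A" => qA K 1
local notation "B" => qB K 1

lemma rel_AB : A * B = B * A + 1 := by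
  have h := RingQuot.mkAlgHom_rel K (qHeisRel.rel (K := K) (q := 1))
  simpa [qA, qB, map_mul, map_add, map_one, one_smul] using h

lemma A_mul_B_pow (n : ℕ) :
    A * B ^ (n + 1) = B ^ (n + 1) * A + (((n : ℕ) + 1 : ℕ) : K) • B ^ n := by
  induction n with
  | zero => simpa only [zero_add, pow_one, pow_zero, Nat.cast_one, one_smul] using rel_AB
  | succ n ih =>
    have h2 : A * B ^ (n + 2) = (A * B ^ (n + 1)) * B := by
      rw [pow_succ, ← mul_assoc]
    rw [h2, ih, add_mul, smul_mul_assoc, mul_assoc, rel_AB, ← pow_succ,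
      mul_add, mul_one, ← mul_assoc, ← pow_succ]
    have h3 : ((n + 1 + 1 : ℕ) : K) = ((n + 1 : ℕ) : K) + 1 := by push_cast; ring
    rw [h3, add_smul, one_smul]
    abel

lemma A_pow_mul_B (n : ℕ) :
    A ^ (n + 1) * B = B * A ^ (n + 1) + (((n : ℕ) + 1 : ℕ) : K) • A ^ n := by
  induction n with
  | zero => simpa only [zero_add, pow_one, pow_zero, Nat.cast_one, one_smul] using rel_AB
  | succ n ih =>
    have h2 : A ^ (n + 2) * B = A * (A ^ (n + 1) * B) := by
      rw [pow_succ', mul_assoc]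
    rw [h2, ih, mul_add, mul_smul_comm, ← pow_succ', ← mul_assoc, rel_AB,
      add_mul, one_mul, mul_assoc, ← pow_succ']
    have h3 : ((n + 1 + 1 : ℕ) : K) = ((n + 1 : ℕ) : K) + 1 := by push_cast; ring
    rw [h3, add_smul, one_smul]
    abel

lemma adA_mono (i j : ℕ) :
    A * (B ^ i * A ^ j) - (B ^ i * A ^ j) * A = (i : K) • (B ^ (i - 1) * A ^ j) := by
  cases i with
  | zero =>
    simp only [pow_zero, one_mul, Nat.cast_zero, zero_smul]
    rw [← pow_succ', ← pow_succ, sub_self]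
  | succ i =>
    rw [← mul_assoc, A_mul_B_pow i, add_mul, smul_mul_assoc, mul_assoc, ← pow_succ',
      mul_assoc, ← pow_succ, add_sub_cancel_left, Nat.add_sub_cancel]

lemma adB_mono (i j : ℕ) :
    (B ^ i * A ^ j) * B - B * (B ^ i * A ^ j) = (j : K) • (B ^ i * A ^ (j - 1)) := by
  cases j with
  | zero =>
    simp only [pow_zero, mul_one, Nat.cast_zero, zero_smul]
    rw [← pow_succ, ← pow_succ', sub_self]
  | succ j =>
    rw [mul_assoc, A_pow_mul_B j, mul_add, mul_smul_comm, ← mul_assoc, ← pow_succ,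
      ← mul_assoc, ← pow_succ', add_sub_cancel_left, Nat.add_sub_cancel]

/-- The span of the monomials `B^i * A^j`. -/
def S (L : Type*) [Field L] : Submodule L (qHeis L 1) :=
  Submodule.span L (Set.range fun p : ℕ × ℕ => qB L 1 ^ p.1 * qA L 1 ^ p.2)

lemma mono_mem (i j : ℕ) : B ^ i * A ^ j ∈ S K :=
  Submodule.subset_span ⟨(i, j), rfl⟩

lemma mulA_left_mem {x : qHeis K 1} (hx : x ∈ S K) : A * x ∈ S K := by
  induction hx using Submodule.span_induction with
  | mem x h =>
    obtain ⟨⟨i, j⟩, rfl⟩ := h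
    cases i with
    | zero => simpa [← pow_succ'] using mono_mem (K := K) 0 (j + 1)
    | succ i =>
      rw [← mul_assoc, A_mul_B_pow i, add_mul, smul_mul_assoc, mul_assoc, ← pow_succ']
      exact Submodule.add_mem _ (mono_mem _ _) (Submodule.smul_mem _ _ (mono_mem _ _))
  | zero => simpa using (S K).zero_mem
  | add x y _ _ hx hy => rw [mul_add]; exact Submodule.add_mem _ hx hy
  | smul a x _ hx => rw [mul_smul_comm]; exact Submodule.smul_mem _ _ hx

lemma mulB_left_mem {x : qHeis K 1} (hx : x ∈ S K) : B * x ∈ S K := by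
  induction hx using Submodule.span_induction with
  | mem x h =>
    obtain ⟨⟨i, j⟩, rfl⟩ := h
    rw [← mul_assoc, ← pow_succ']
    exact mono_mem _ _
  | zero => simpa using (S K).zero_mem
  | add x y _ _ hx hy => rw [mul_add]; exact Submodule.add_mem _ hx hy
  | smul a x _ hx => rw [mul_smul_comm]; exact Submodule.smul_mem _ _ hx

lemma mulApow_left_mem (j : ℕ) {x : qHeis K 1} (hx : x ∈ S K) : A ^ j * x ∈ S K := by
  induction j with
  | zero => simpa using hx
  | succ j ih => rw [pow_succ', mul_assoc]; exact mulA_left_mem ih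

lemma mulBpow_left_mem (i : ℕ) {x : qHeis K 1} (hx : x ∈ S K) : B ^ i * x ∈ S K := by
  induction i with
  | zero => simpa using hx
  | succ i ih => rw [pow_succ', mul_assoc]; exact mulB_left_mem ih

lemma mul_mem_S {x y : qHeis K 1} (hx : x ∈ S K) (hy : y ∈ S K) : x * y ∈ S K := by
  induction hx using Submodule.span_induction with
  | mem x h =>
    obtain ⟨⟨i, j⟩, rfl⟩ := h
    rw [mul_assoc]
    exact mulBpow_left_mem i (mulApow_left_mem j hy)
  | zero => simpa using (S K).zero_mem
  | add x y _ _ hx' hy' => rw [add_mul]; exact Submodule.add_mem _ hx' hy'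
  | smul a x _ hx' => rw [smul_mul_assoc]; exact Submodule.smul_mem _ _ hx'

lemma mem_S (x : qHeis K 1) : x ∈ S K := by
  obtain ⟨f, rfl⟩ := RingQuot.mkAlgHom_surjective K (qHeisRel K 1) x
  induction f with
  | grade0 r =>
    rw [AlgHom.commutes, Algebra.algebraMap_eq_smul_one]
    exact Submodule.smul_mem _ _ (by simpa using mono_mem (K := K) 0 0)
  | grade1 i =>
    fin_cases i
    · simpa [qA] using mono_mem (K := K) 0 1
    · simpa [qB] using mono_mem (K := K) 1 0
  | mul a b ha hb => rw [map_mul]; exact mul_mem_S ha hb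
  | add a b ha hb => rw [map_add]; exact Submodule.add_mem _ ha hb

/-! ### A representation on `K[X]`, giving nontriviality -/

/-- The representation of the free algebra: `A ↦ d/dX`, `B ↦ X·`. -/
def repFree : FreeAlgebra K (Fin 2) →ₐ[K] Module.End K (Polynomial K) :=
  FreeAlgebra.lift K ![Polynomial.derivative, LinearMap.mulLeft K Polynomial.X]

lemma repFree_rel : ∀ ⦃x y⦄, qHeisRel K 1 x y → repFree (K := K) x = repFree y := by
  rintro _ _ ⟨⟩
  rw [map_mul, map_add, map_one, one_smul, map_mul]
  show (repFree (FreeAlgebra.ι K 0)) * (repFree (FreeAlgebra.ι K 1))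
    = (repFree (FreeAlgebra.ι K 1)) * (repFree (FreeAlgebra.ι K 0)) + 1
  simp only [repFree, FreeAlgebra.lift_ι_apply, Matrix.cons_val_zero, Matrix.cons_val_one,
    Matrix.head_cons]
  refine LinearMap.ext fun p => ?_
  simp only [Module.End.mul_apply, LinearMap.mulLeft_apply, LinearMap.add_apply,
    Module.End.one_apply, Polynomial.derivative_mul, Polynomial.derivative_X, one_mul]
  ring

def rep : qHeis K 1 →ₐ[K] Module.End K (Polynomial K) :=
  RingQuot.liftAlgHom K ⟨repFree, repFree_rel⟩

instance : Nontrivial (qHeis K 1) := by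
  refine nontrivial_of_ne 1 0 fun h => ?_
  have h2 : (rep (K := K)) 1 = rep 0 := by rw [h]
  rw [map_one, map_zero] at h2
  have h3 := LinearMap.congr_fun h2 (1 : Polynomial K)
  simp at h3

/-! ### Extracting `1` from a nonzero two-sided ideal -/

lemma one_mem_of_smul_one_mem (I : TwoSidedIdeal (qHeis K 1)) {c : K} (hc : c ≠ 0)
    (h : c • (1 : qHeis K 1) ∈ I) : (1 : qHeis K 1) ∈ I := by
  have h2 : (algebraMap K (qHeis K 1) c⁻¹) * (c • (1 : qHeis K 1)) ∈ I :=
    I.mul_mem_left _ _ h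
  rwa [← Algebra.smul_def, smul_smul, inv_mul_cancel₀ hc, one_smul] at h2

variable [CharZero K]

lemma stage1 (I : TwoSidedIdeal (qHeis K 1)) :
    ∀ (n : ℕ) (c : ℕ → K),
      (∑ j ∈ Finset.range (n + 1), c j • A ^ j) ∈ I →
      (∃ j, j ≤ n ∧ c j ≠ 0) → (1 : qHeis K 1) ∈ I := by
  intro n
  induction n with
  | zero =>
    intro c hmem hex
    obtain ⟨j, hj, hcj⟩ := hex
    have : j = 0 := Nat.le_zero.1 hj
    subst this
    refine one_mem_of_smul_one_mem I hcj ?_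
    simpa using hmem
  | succ n ih =>
    intro c hmem hex
    set h := ∑ j ∈ Finset.range (n + 2), c j • A ^ j with hh
    have hmem' : h * B - B * h ∈ I :=
      I.sub_mem (I.mul_mem_right _ _ hmem) (I.mul_mem_left _ _ hmem)
    have hterm : ∀ j : ℕ, (c j • A ^ j) * B - B * (c j • A ^ j)
        = ((j : K) * c j) • A ^ (j - 1) := by
      intro j
      have hb := adB_mono (K := K) 0 j
      simp only [pow_zero, one_mul] at hb
      rw [smul_mul_assoc, mul_smul_comm]
      have h4 : c j • (A ^ j * B) - c j • (B * A ^ j) = c j • (A ^ j * B - B * A ^ j) :=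
        (smul_sub (c j) _ _).symm
      rw [h4, hb, smul_smul, mul_comm (c j)]
    have key : h * B - B * h
        = ∑ j ∈ Finset.range (n + 1), (((j : ℕ) + 1 : K) * c (j + 1)) • A ^ j := by
      calc h * B - B * h
          = ∑ j ∈ Finset.range (n + 2), ((j : K) * c j) • A ^ (j - 1) := by
            rw [hh, Finset.sum_mul, Finset.mul_sum, ← Finset.sum_sub_distrib]
            exact Finset.sum_congr rfl fun j _ => hterm j
        _ = _ := by
            rw [Finset.sum_range_succ']
            simp only [Nat.cast_zero, zero_mul, zero_smul, add_zero, Nat.cast_add,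
              Nat.cast_one, Nat.add_sub_cancel]
    by_cases hc : ∃ j, j ≤ n ∧ ((j : ℕ) + 1 : K) * c (j + 1) ≠ 0
    · exact ih (fun j => ((j : ℕ) + 1 : K) * c (j + 1)) (key ▸ hmem') hc
    · push_neg at hc
      have hzero : ∀ j, 1 ≤ j → j ≤ n + 1 → c j = 0 := by
        intro j h1 h2
        obtain ⟨k, rfl⟩ := Nat.exists_eq_add_of_le h1
        have hck := hc k (by omega)
        have hne : ((k : ℕ) + 1 : K) ≠ 0 := by exact_mod_cast Nat.succ_ne_zero k
        rcases mul_eq_zero.1 hck with h' | h'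
        · exact absurd h' hne
        · simpa [add_comm] using h'
      obtain ⟨j, hj, hcj⟩ := hex
      have hj0 : j = 0 := by
        by_contra hne
        exact hcj (hzero j (by omega) (by omega))
      subst hj0
      have hz : ∀ k ∈ Finset.range (n + 1), c (k + 1) • A ^ (k + 1) = (0 : qHeis K 1) := by
        intro k hk
        rw [hzero (k + 1) (by omega) (by simp only [Finset.mem_range] at hk; omega), zero_smul]
      have hsum : h = c 0 • (1 : qHeis K 1) := by
        rw [hh, Finset.sum_range_succ', Finset.sum_eq_zero hz, zero_add, pow_zero]
      exact one_mem_of_smul_one_mem I hcj (hsum ▸ hmem)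

lemma stage2 (I : TwoSidedIdeal (qHeis K 1)) :
    ∀ (m n : ℕ) (c : ℕ → ℕ → K),
      (∑ i ∈ Finset.range (m + 1), ∑ j ∈ Finset.range (n + 1), c i j • (B ^ i * A ^ j)) ∈ I →
      (∃ i j, i ≤ m ∧ j ≤ n ∧ c i j ≠ 0) → (1 : qHeis K 1) ∈ I := by
  intro m
  induction m with
  | zero =>
    intro n c hmem hex
    obtain ⟨i, j, hi, hj, hcij⟩ := hex
    have : i = 0 := Nat.le_zero.1 hi
    subst this
    refine stage1 I n (c 0) ?_ ⟨j, hj, hcij⟩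
    simpa using hmem
  | succ m ih =>
    intro n c hmem hex
    set h := ∑ i ∈ Finset.range (m + 2), ∑ j ∈ Finset.range (n + 1), c i j • (B ^ i * A ^ j)
      with hh
    have hmem' : A * h - h * A ∈ I :=
      I.sub_mem (I.mul_mem_left _ _ hmem) (I.mul_mem_right _ _ hmem)
    have hterm : ∀ i j : ℕ,
        A * (c i j • (B ^ i * A ^ j)) - (c i j • (B ^ i * A ^ j)) * A
        = ((i : K) * c i j) • (B ^ (i - 1) * A ^ j) := by
      intro i j
      rw [mul_smul_comm, smul_mul_assoc]
      have h4 : c i j • (A * (B ^ i * A ^ j)) - c i j • (B ^ i * A ^ j * A)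
          = c i j • (A * (B ^ i * A ^ j) - B ^ i * A ^ j * A) := (smul_sub (c i j) _ _).symm
      rw [h4, adA_mono, smul_smul, mul_comm (c i j)]
    have key : A * h - h * A
        = ∑ i ∈ Finset.range (m + 1), ∑ j ∈ Finset.range (n + 1),
            (((i : ℕ) + 1 : K) * c (i + 1) j) • (B ^ i * A ^ j) := by
      calc A * h - h * A
          = ∑ i ∈ Finset.range (m + 2), ∑ j ∈ Finset.range (n + 1),
              ((i : K) * c i j) • (B ^ (i - 1) * A ^ j) := by
            rw [hh, Finset.mul_sum, Finset.sum_mul, ← Finset.sum_sub_distrib]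
            refine Finset.sum_congr rfl fun i _ => ?_
            rw [Finset.mul_sum, Finset.sum_mul, ← Finset.sum_sub_distrib]
            exact Finset.sum_congr rfl fun j _ => hterm i j
        _ = _ := by
            rw [Finset.sum_range_succ']
            simp only [Nat.cast_zero, zero_mul, zero_smul, Finset.sum_const_zero, add_zero,
              Nat.cast_add, Nat.cast_one, Nat.add_sub_cancel]
    by_cases hc : ∃ i j, i ≤ m ∧ j ≤ n ∧ ((i : ℕ) + 1 : K) * c (i + 1) j ≠ 0
    · exact ih n (fun i j => ((i : ℕ) + 1 : K) * c (i + 1) j) (key ▸ hmem') hc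
    · push_neg at hc
      have hzero : ∀ i j, 1 ≤ i → i ≤ m + 1 → j ≤ n → c i j = 0 := by
        intro i j h1 h2 h3
        obtain ⟨k, rfl⟩ := Nat.exists_eq_add_of_le h1
        have hck := hc k j (by omega) (by omega)
        have hne : ((k : ℕ) + 1 : K) ≠ 0 := by exact_mod_cast Nat.succ_ne_zero k
        rcases mul_eq_zero.1 hck with h' | h'
        · exact absurd h' hne
        · simpa [add_comm] using h'
      obtain ⟨i, j, hi, hj, hcij⟩ := hex
      have hi0 : i = 0 := by
        by_contra hne
        exact hcij (hzero i j (by omega) (by omega) hj)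
      subst hi0
      have hz : ∀ k ∈ Finset.range (m + 1),
          (∑ j ∈ Finset.range (n + 1), c (k + 1) j • (B ^ (k + 1) * A ^ j)) = (0 : qHeis K 1) := by
        intro k hk
        refine Finset.sum_eq_zero fun l hl => ?_
        rw [hzero (k + 1) l (by omega) (by simp only [Finset.mem_range] at hk; omega)
          (by simp only [Finset.mem_range] at hl; omega), zero_smul]
      have hsum : h = ∑ j ∈ Finset.range (n + 1), c 0 j • A ^ j := by
        rw [hh, Finset.sum_range_succ', Finset.sum_eq_zero hz, zero_add]
        simp
      exact stage1 I n (c 0) (hsum ▸ hmem) ⟨j, hj, hcij⟩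

end HeisAux

/-- Over a field `K` of characteristic zero, the Heisenberg algebra
`H₁ = K⟨A,B⟩/⟨AB − BA − 1⟩` (the `q`-deformed Heisenberg algebra with `q = 1`)
is a simple ring: its only two-sided ideals are `⊥` and `⊤`. -/
theorem heisenberg_algebra_isSimpleRing
    {K : Type*} [Field K] [CharZero K] :
    IsSimpleRing (qHeis K 1) := by
  haveI : Nontrivial (TwoSidedIdeal (qHeis K 1)) :=
    ⟨⟨⊥, ⊤, fun h => one_ne_zero
      ((TwoSidedIdeal.mem_bot _).1 (h.symm ▸ (TwoSidedIdeal.mem_top (x := (1 : qHeis K 1)))))⟩⟩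
  constructor
  constructor
  intro I
  
  by_cases hI : I = ⊥
  · exact Or.inl hI
  · refine Or.inr (TwoSidedIdeal.one_mem_iff I |>.1 ?_)
    -- there is a nonzero element of `I`
    have hex : ∃ x, x ∈ I ∧ x ≠ 0 := by
      by_contra hno
      push_neg at hno
      apply hI
      refine le_antisymm (fun x hx => ?_) bot_le
      exact (TwoSidedIdeal.mem_bot _).2 (hno x hx)
    obtain ⟨x, hxI, hx0⟩ := hex
    obtain ⟨c, hc⟩ := Finsupp.mem_span_range_iff_exists_finsupp.1 (HeisAux.mem_S x)
    have hcne : c ≠ 0 := by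
      rintro rfl
      exact hx0 (by simpa using hc.symm)
    obtain ⟨p, hp⟩ := Finsupp.support_nonempty_iff.2 hcne
    set m := c.support.sup Prod.fst with hm
    set n := c.support.sup Prod.snd with hn
    have hsub : c.support ⊆ Finset.range (m + 1) ×ˢ Finset.range (n + 1) := by
      intro q hq
      simp only [Finset.mem_product, Finset.mem_range]
      exact ⟨Nat.lt_succ_of_le (Finset.le_sup (f := Prod.fst) hq),
        Nat.lt_succ_of_le (Finset.le_sup (f := Prod.snd) hq)⟩
    have hx : x = ∑ i ∈ Finset.range (m + 1), ∑ j ∈ Finset.range (n + 1),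
        c (i, j) • (qB K 1 ^ i * qA K 1 ^ j) := by
      rw [← hc, Finsupp.sum, ← Finset.sum_product']
      refine Finset.sum_subset hsub fun q _ hq => ?_
      rw [Finsupp.notMem_support_iff.1 hq, zero_smul]
    refine HeisAux.stage2 I m n (fun i j => c (i, j)) (hx ▸ hxI) ?_
    exact ⟨p.1, p.2, Finset.le_sup (f := Prod.fst) hp, Finset.le_sup (f := Prod.snd) hp,
      by simpa using Finsupp.mem_support_iff.1 hp⟩
end
end
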